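/- Let k ≥ 2 and let G be a finite simple graph with no isolated vertices that is {S_k, kK₂, S_{k−1}∪K₂}-free and satisfies e(G) = (k−1)². Then G is isomorphic to the complete bipartite graph K_{k−1,k−1}, or k = 4 and G is isomorphic to the disjoint union of three triangles 3K₃. -/

import Mathlib

def IsMatchingSet {V : Type*} (G : SimpleGraph V) (M : Finset (Sym2 V)) : Prop :=
  (∀ e ∈ M, e ∈ G.edgeSet) ∧ ∀ e ∈ M, ∀ f ∈ M, e ≠ f → ∀ v, v ∈ e → v ∉ f

def ContainsCopy {α β : Type*} (H : SimpleGraph α) (G : SimpleGraph β) : Prop :=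
  ∃ f : α → β, Function.Injective f ∧ ∀ a b, H.Adj a b → G.Adj (f a) (f b)

def kMatching (k : ℕ) : SimpleGraph (Fin (2 * k)) :=
  SimpleGraph.fromRel (fun a b => (a : ℕ) / 2 = (b : ℕ) / 2)

def starGraph (m : ℕ) : SimpleGraph (Fin 1 ⊕ Fin m) := completeBipartiteGraph (Fin 1) (Fin m)

def disjUnionGraph {α β : Type*} (G : SimpleGraph α) (H : SimpleGraph β) : SimpleGraph (α ⊕ β) :=
  SimpleGraph.fromRel (fun x y => match x, y with
    | Sum.inl a, Sum.inl b => G.Adj a b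
    | Sum.inr a, Sum.inr b => H.Adj a b
    | _, _ => False)

def threeK3 : SimpleGraph (Fin 9) :=
  SimpleGraph.fromRel (fun a b => (a : ℕ) / 3 = (b : ℕ) / 3)

open Finset SimpleGraph

attribute [local instance] Classical.propDecidable

namespace SMF

set_option linter.unusedSectionVars false

variable {V : Type*} [Fintype V] [DecidableEq V] (G : SimpleGraph V) [DecidableRel G.Adj]

lemma edge_ends {e : Sym2 V} (he : e ∈ G.edgeSet) :
    ∃ a b, a ≠ b ∧ G.Adj a b ∧ e = s(a, b) := by
  induction e with
  | _ a b =>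
    rw [SimpleGraph.mem_edgeSet] at he
    exact ⟨a, b, he.ne, he, rfl⟩

lemma matching_subset {M M' : Finset (Sym2 V)} (h : IsMatchingSet G M) (hsub : M' ⊆ M) :
    IsMatchingSet G M' :=
  ⟨fun e he => h.1 e (hsub he), fun e he f hf => h.2 e (hsub he) f (hsub hf)⟩

/-- Bridge 1 : no `S_k` copy implies all degrees are `< k`. -/
lemma degree_lt (h1 : ¬ ContainsCopy (_root_.starGraph k) G) (v : V) : G.degree v < k := by
  by_contra hge
  push_neg at hge
  obtain ⟨t, hts, htc⟩ := Finset.exists_subset_card_eq (le_trans hge (le_of_eq (G.card_neighborFinset_eq_degree v).symm))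
  have et : { x // x ∈ t } ≃ Fin k := t.equivFinOfCardEq htc
  apply h1
  refine ⟨Sum.elim (fun _ => v) (fun i => (et.symm i : V)), ?_, ?_⟩
  · rintro (a | a) (b | b) hab
    · exact congrArg _ (Subsingleton.elim a b)
    · exfalso
      simp only [Sum.elim_inl, Sum.elim_inr] at hab
      have : (et.symm b : V) ∈ G.neighborFinset v := hts (et.symm b).2
      rw [SimpleGraph.mem_neighborFinset] at this
      exact G.ne_of_adj this (by rw [← hab])
    · exfalso
      simp only [Sum.elim_inl, Sum.elim_inr] at hab
      have : (et.symm a : V) ∈ G.neighborFinset v := hts (et.symm a).2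
      rw [SimpleGraph.mem_neighborFinset] at this
      exact G.ne_of_adj this hab.symm
    · simp only [Sum.elim_inr] at hab
      have := et.symm.injective (Subtype.ext hab)
      rw [this]
  · rintro (a | a) (b | b) hab <;>
      simp only [_root_.starGraph, completeBipartiteGraph_adj, Sum.isLeft_inl, Sum.isRight_inr,
        Sum.isRight_inl, Sum.isLeft_inr, Sum.elim_inl, Sum.elim_inr] at hab ⊢
    · tauto
    · have : (et.symm b : V) ∈ G.neighborFinset v := hts (et.symm b).2
      rw [SimpleGraph.mem_neighborFinset] at this
      exact this
    · have : (et.symm a : V) ∈ G.neighborFinset v := hts (et.symm a).2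
      rw [SimpleGraph.mem_neighborFinset] at this
      exact this.symm
    · tauto

/-- Bridge 2 : no `k·K₂` copy implies every matching has `< k` edges. -/
lemma matching_lt (h2 : ¬ ContainsCopy (kMatching k) G) {M : Finset (Sym2 V)}
    (hM : IsMatchingSet G M) : M.card < k := by
  by_contra hge
  push_neg at hge
  obtain ⟨M', hM's, hM'c⟩ := Finset.exists_subset_card_eq hge
  have hM' := matching_subset G hM hM's
  have eM : Fin k ≃ { x // x ∈ M' } := (M'.equivFinOfCardEq hM'c).symm
  have hends : ∀ i : Fin k, ∃ a : V, ∃ b : V, a ≠ b ∧ G.Adj a b ∧ (eM i : Sym2 V) = s(a, b) := by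
    intro i
    exact edge_ends G (hM'.1 _ (eM i).2)
  choose Fa Fb hF1 hF2 hF3 using hends
  apply h2
  have hdiv : ∀ i : Fin (2 * k), (i : ℕ) / 2 < k := by
    intro i; have := i.2; omega
  set f : Fin (2 * k) → V :=
    fun i => if (i : ℕ) % 2 = 0 then Fa ⟨(i : ℕ) / 2, hdiv i⟩ else Fb ⟨(i : ℕ) / 2, hdiv i⟩ with hf
  have hfmem : ∀ i : Fin (2 * k), f i ∈ (eM ⟨(i : ℕ) / 2, hdiv i⟩ : Sym2 V) := by
    intro i
    rw [hF3]
    by_cases hp : (i : ℕ) % 2 = 0 <;> simp [hf, hp, Sym2.mem_iff]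
  refine ⟨f, ?_, ?_⟩
  · intro a b hab
    by_cases hj : ((a : ℕ) / 2 : ℕ) = (b : ℕ) / 2
    · have hja : (⟨(a : ℕ) / 2, hdiv a⟩ : Fin k) = ⟨(b : ℕ) / 2, hdiv b⟩ := by
        simpa [Fin.ext_iff] using hj
      by_cases hpa : (a : ℕ) % 2 = 0 <;> by_cases hpb : (b : ℕ) % 2 = 0
      · apply Fin.ext; omega
      · exfalso
        simp only [hf, hpa, hpb, if_pos, if_neg, if_true, if_false, hja] at hab
        exact hF1 _ hab
      · exfalso
        simp only [hf, hpa, hpb, if_pos, if_neg, if_true, if_false, hja] at hab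
        exact hF1 _ hab.symm
      · apply Fin.ext; omega
    · exfalso
      have hne : (eM ⟨(a : ℕ) / 2, hdiv a⟩ : Sym2 V) ≠ (eM ⟨(b : ℕ) / 2, hdiv b⟩ : Sym2 V) := by
        intro h
        have := eM.injective (Subtype.ext h)
        apply hj
        simpa [Fin.ext_iff] using this
      have hmem1 := hfmem a
      rw [hab] at hmem1
      exact hM'.2 _ (eM _).2 _ (eM _).2 hne _ hmem1 (hfmem b)
  · intro a b hab
    rw [kMatching, SimpleGraph.fromRel_adj] at hab
    obtain ⟨hne, hj⟩ := hab
    have hj : ((a : ℕ) / 2 : ℕ) = (b : ℕ) / 2 := by tauto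
    have hja : (⟨(a : ℕ) / 2, hdiv a⟩ : Fin k) = ⟨(b : ℕ) / 2, hdiv b⟩ := by
      simpa [Fin.ext_iff] using hj
    have hne' : (a : ℕ) % 2 ≠ (b : ℕ) % 2 := by
      intro h
      exact hne (Fin.ext (by omega))
    by_cases hpa : (a : ℕ) % 2 = 0 <;> by_cases hpb : (b : ℕ) % 2 = 0
    · omega
    · simp only [hf, hpa, hpb, if_pos, if_neg, if_true, if_false, hja]
      exact hF2 _
    · simp only [hf, hpa, hpb, if_pos, if_neg, if_true, if_false, hja]
      exact (hF2 _).symm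
    · omega


/-- Bridge 3 : if `v` has degree `k-1` and an edge avoids the closed neighbourhood of `v`,
we get a copy of `S_{k-1} ∪ K₂`. -/
lemma no_far_edge (h3 : ¬ ContainsCopy (disjUnionGraph (_root_.starGraph (k - 1)) (kMatching 1)) G)
    {v x y : V} (hdeg : G.degree v = k - 1) (hxy : G.Adj x y)
    (hx : x ≠ v) (hx' : ¬ G.Adj v x) (hy : y ≠ v) (hy' : ¬ G.Adj v y) : False := by
  have et : { w // w ∈ G.neighborFinset v } ≃ Fin (k - 1) :=
    (G.neighborFinset v).equivFinOfCardEq (by rw [G.card_neighborFinset_eq_degree v]; exact hdeg)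
  have hnb : ∀ i : Fin (k - 1), G.Adj v (et.symm i : V) := by
    intro i
    have := (et.symm i).2
    rwa [SimpleGraph.mem_neighborFinset] at this
  set g : Fin (2 * 1) → V := fun j => if (j : ℕ) = 0 then x else y with hg
  have hgmem : ∀ j : Fin (2 * 1), g j = x ∨ g j = y := by
    intro j
    by_cases hj : (j : ℕ) = 0
    · left; simp only [hg, hj, if_true]
    · right; simp only [hg, hj, if_false]
  have hgne : ∀ j, g j ≠ v := by
    intro j; rcases hgmem j with h | h <;> rw [h] <;> assumption
  have hgnadj : ∀ j, ¬ G.Adj v (g j) := by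
    intro j; rcases hgmem j with h | h <;> rw [h] <;> assumption
  apply h3
  refine ⟨Sum.elim (Sum.elim (fun _ => v) (fun i => (et.symm i : V))) g, ?_, ?_⟩
  · rintro ((a | a) | a) ((b | b) | b) hab <;>
      simp only [Sum.elim_inl, Sum.elim_inr] at hab
    · rw [Subsingleton.elim a b]
    · exact absurd hab (G.ne_of_adj (hnb b))
    · exact absurd hab.symm (hgne b)
    · exact absurd hab.symm (G.ne_of_adj (hnb a))
    · rw [et.symm.injective (Subtype.ext hab)]
    · exact absurd (hab ▸ hnb a) (hgnadj b)
    · exact absurd hab (hgne a)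
    · exact absurd (hab.symm ▸ hnb b) (hgnadj a)
    · -- both in the extra edge
      have h2 : (a : ℕ) < 2 := a.2
      have h2' : (b : ℕ) < 2 := b.2
      change g a = g b at hab
      by_cases ha : (a : ℕ) = 0 <;> by_cases hb : (b : ℕ) = 0
      · exact congrArg _ (Fin.ext (by omega))
      · have hga : g a = x := by simp only [hg, ha, if_true, if_false]
        have hgb : g b = y := by simp only [hg, hb, if_true, if_false]
        rw [hga, hgb] at hab
        exact absurd hab hxy.ne
      · have hga : g a = y := by simp only [hg, ha, if_true, if_false]
        have hgb : g b = x := by simp only [hg, hb, if_true, if_false]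
        rw [hga, hgb] at hab
        exact absurd hab.symm hxy.ne
      · exact congrArg _ (Fin.ext (by omega))
  · rintro ((a | a) | a) ((b | b) | b) hab <;>
      rw [disjUnionGraph, SimpleGraph.fromRel_adj] at hab <;>
      simp only [Sum.elim_inl, Sum.elim_inr] <;>
      obtain ⟨hne, hrel⟩ := hab
    · exfalso
      simp only [_root_.starGraph, completeBipartiteGraph_adj] at hrel
      rcases hrel with h | h <;> simp at h
    · exact hnb b
    · exact absurd hrel (by rintro (h | h) <;> exact h)
    · exact (hnb a).symm
    · exfalso
      simp only [_root_.starGraph, completeBipartiteGraph_adj] at hrel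
      rcases hrel with h | h <;> simp at h
    · exact absurd hrel (by rintro (h | h) <;> exact h)
    · exact absurd hrel (by rintro (h | h) <;> exact h)
    · exact absurd hrel (by rintro (h | h) <;> exact h)
    · -- the kMatching 1 edge
      have hane : (a : ℕ) ≠ (b : ℕ) := fun h => hne (congrArg Sum.inr (Fin.ext h))
      have h2 : (a : ℕ) < 2 := a.2
      have h2' : (b : ℕ) < 2 := b.2
      show G.Adj (g a) (g b)
      by_cases ha : (a : ℕ) = 0 <;> by_cases hb : (b : ℕ) = 0
      · omega
      · have hga : g a = x := by simp only [hg, ha, if_true, if_false]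
        have hgb : g b = y := by simp only [hg, hb, if_true, if_false]
        rw [hga, hgb]; exact hxy
      · have hga : g a = y := by simp only [hg, ha, if_true, if_false]
        have hgb : g b = x := by simp only [hg, hb, if_true, if_false]
        rw [hga, hgb]; exact hxy.symm
      · omega

section Infra

variable (A : Finset V)

/-- The edges of `G` lying inside the vertex set `A`. -/
def onE : Finset (Sym2 V) := G.edgeFinset.filter (fun e => ∀ x ∈ e, x ∈ A)

lemma mem_onE {e : Sym2 V} : e ∈ onE G A ↔ e ∈ G.edgeSet ∧ ∀ x ∈ e, x ∈ A := by
  simp [onE, Finset.mem_filter, SimpleGraph.mem_edgeFinset]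

/-- A matching all of whose edges lie inside `A`. -/
def MOn (M : Finset (Sym2 V)) : Prop := IsMatchingSet G M ∧ M ⊆ onE G A

/-- The matching number of the part of `G` inside `A`. -/
noncomputable def nuOn : ℕ :=
  ((onE G A).powerset.filter (fun M => IsMatchingSet G M)).sup Finset.card

lemma MOn.card_le {A : Finset V} {M : Finset (Sym2 V)} (h : MOn G A M) :
    M.card ≤ nuOn G A :=
  Finset.le_sup (by simp only [Finset.mem_filter, Finset.mem_powerset]; exact ⟨h.2, h.1⟩)

lemma exists_max_matching : ∃ M, MOn G A M ∧ M.card = nuOn G A := by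
  classical
  have hne : ((onE G A).powerset.filter (fun M => IsMatchingSet G M)).Nonempty := by
    refine ⟨∅, ?_⟩
    simp only [Finset.mem_filter, Finset.mem_powerset]
    exact ⟨Finset.empty_subset _, ⟨fun e he => absurd he (Finset.notMem_empty e), fun e he => absurd he (Finset.notMem_empty e)⟩⟩
  obtain ⟨M, hMmem, hMeq⟩ := Finset.exists_mem_eq_sup _ hne Finset.card
  simp only [Finset.mem_filter, Finset.mem_powerset] at hMmem
  exact ⟨M, ⟨hMmem.2, hMmem.1⟩, hMeq.symm⟩

lemma nuOn_mono {A B : Finset V} (h : A ⊆ B) : nuOn G A ≤ nuOn G B := by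
  obtain ⟨M, hM, hc⟩ := exists_max_matching G A
  rw [← hc]
  exact MOn.card_le G ⟨hM.1, fun e he => by
    rw [mem_onE] at *
    have := hM.2 he
    rw [mem_onE] at this
    exact ⟨this.1, fun x hx => h (this.2 x hx)⟩⟩

lemma nuOn_le_erase_add_one (v : V) : nuOn G A ≤ nuOn G (A.erase v) + 1 := by
  obtain ⟨M, hM, hc⟩ := exists_max_matching G A
  set M' := M.filter (fun e => v ∉ e) with hM'
  have hsub : M' ⊆ M := Finset.filter_subset _ _
  have hMon : MOn G (A.erase v) M' := by
    refine ⟨matching_subset G hM.1 hsub, fun e he => ?_⟩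
    rw [hM', Finset.mem_filter] at he
    have h1 := hM.2 he.1
    rw [mem_onE] at h1 ⊢
    exact ⟨h1.1, fun x hx => Finset.mem_erase.2 ⟨fun hv => he.2 (hv ▸ hx), h1.2 x hx⟩⟩
  have hcard : M.card ≤ M'.card + 1 := by
    have : M \ M' ⊆ {e | v ∈ e}.toFinset ∩ M := by
      intro e he
      rw [Finset.mem_sdiff, hM', Finset.mem_filter] at he
      simp only [Finset.mem_inter, Set.mem_toFinset, Set.mem_setOf_eq]
      exact ⟨by tauto, he.1⟩
    have hone : (M \ M').card ≤ 1 := by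
      rw [Finset.card_le_one]
      intro e he f hf
      rw [Finset.mem_sdiff, hM', Finset.mem_filter] at he hf
      have hv1 : v ∈ e := by tauto
      have hv2 : v ∈ f := by tauto
      by_contra hne
      exact hM.1.2 e he.1 f hf.1 hne v hv1 hv2
    have := Finset.card_sdiff_add_card_eq_card hsub
    omega
  calc nuOn G A = M.card := hc.symm
  _ ≤ M'.card + 1 := hcard
  _ ≤ nuOn G (A.erase v) + 1 := by have := MOn.card_le G hMon; omega

lemma card_covered {M : Finset (Sym2 V)} (hM : IsMatchingSet G M) :
    (Finset.univ.filter (fun x : V => ∃ e ∈ M, x ∈ e)).card = 2 * M.card := by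
  classical
  have heq : Finset.univ.filter (fun x : V => ∃ e ∈ M, x ∈ e)
      = M.biUnion (fun e => Finset.univ.filter (fun x : V => x ∈ e)) := by
    ext x
    simp [Finset.mem_biUnion, Finset.mem_filter]
  rw [heq, Finset.card_biUnion]
  · have h2 : ∀ e ∈ M, (Finset.univ.filter (fun x : V => x ∈ e)).card = 2 := by
      intro e he
      obtain ⟨a, b, hab, hadj, hee⟩ := edge_ends G (hM.1 e he)
      have : Finset.univ.filter (fun x : V => x ∈ e) = {a, b} := by
        ext x
        simp [hee, Sym2.mem_iff]
      rw [this, Finset.card_insert_of_notMem (by simp [hab]), Finset.card_singleton]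
    rw [Finset.sum_congr rfl h2]
    simp [Finset.sum_const, mul_comm]
  · intro e he f hf hne
    simp only [Finset.disjoint_left, Finset.mem_filter]
    rintro x ⟨-, hx⟩ ⟨-, hx'⟩
    exact hM.2 e he f hf hne x hx hx'

lemma two_mul_card_le {A : Finset V} {M : Finset (Sym2 V)} (h : MOn G A M) :
    2 * M.card ≤ A.card := by
  rw [← card_covered G h.1]
  apply Finset.card_le_card
  intro x hx
  rw [Finset.mem_filter] at hx
  obtain ⟨-, e, he, hxe⟩ := hx
  have := h.2 he
  rw [mem_onE] at this
  exact this.2 x hxe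

/-- Degree of `v` inside `A`. -/
def degOn (v : V) : ℕ := (A.filter (fun w => G.Adj v w)).card

lemma degree_eq_card_incident (v : V) :
    G.degree v = (G.edgeFinset.filter (fun e => v ∈ e)).card := by
  rw [← SimpleGraph.card_incidenceFinset_eq_degree]
  congr 1
  ext e
  simp [SimpleGraph.mem_incidenceFinset, SimpleGraph.incidenceSet, SimpleGraph.mem_edgeFinset]

end Infra


section Counting

lemma sum_filter_card_comm (s : Finset V) (T : Finset (Sym2 V)) :
    ∑ v ∈ s, (T.filter (fun e => v ∈ e)).card = ∑ e ∈ T, (s.filter (fun v => v ∈ e)).card := by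
  simp only [Finset.card_filter]
  rw [Finset.sum_comm]

lemma card_filter_mem_edge {a b : V} (hab : a ≠ b) (s : Finset V) :
    (s.filter (fun x => x ∈ s(a, b))).card
      = (if a ∈ s then 1 else 0) + (if b ∈ s then 1 else 0) := by
  have h : s.filter (fun x => x ∈ s(a, b)) = ({a, b} : Finset V).filter (fun x => x ∈ s) := by
    ext x
    simp only [Finset.mem_filter, Sym2.mem_iff, Finset.mem_insert, Finset.mem_singleton]
    tauto
  rw [h, Finset.filter_insert]
  by_cases ha : a ∈ s <;> by_cases hb : b ∈ s <;>
    simp [ha, hb, Finset.filter_singleton, Finset.card_insert_of_notMem, hab]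

lemma degOn_le_degree (A : Finset V) (v : V) : degOn G A v ≤ G.degree v := by
  rw [← G.card_neighborFinset_eq_degree]
  apply Finset.card_le_card
  intro w hw
  rw [Finset.mem_filter] at hw
  rw [SimpleGraph.mem_neighborFinset]
  exact hw.2

lemma sum_degOn_eq (A : Finset V) :
    ∑ v ∈ A, degOn G A v = 2 * (onE G A).card := by
  have h1 : ∀ v ∈ A, degOn G A v = ((onE G A).filter (fun e => v ∈ e)).card := by
    intro v hv
    rw [degOn]
    apply Finset.card_bij (fun w _ => s(v, w))
    · intro w hw
      rw [Finset.mem_filter] at hw ⊢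
      rw [mem_onE]
      refine ⟨⟨hw.2, ?_⟩, ?_⟩
      · intro x hx
        rw [Sym2.mem_iff] at hx
        rcases hx with rfl | rfl
        · exact hv
        · exact hw.1
      · simp [Sym2.mem_iff]
    · intro w hw w' hw' heq
      rw [Finset.mem_filter] at hw hw'
      rw [Sym2.eq_iff] at heq
      rcases heq with ⟨-, h⟩ | ⟨h1', h2⟩
      · exact h
      · exact h2.trans h1'
    · intro e hemem
      rw [Finset.mem_filter, mem_onE] at hemem
      obtain ⟨⟨hee, hset⟩, hve⟩ := hemem
      obtain ⟨a, b, hab, hadj, rfl⟩ := edge_ends G hee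
      rw [Sym2.mem_iff] at hve
      rcases hve with rfl | rfl
      · exact ⟨b, Finset.mem_filter.2 ⟨hset b (by simp [Sym2.mem_iff]), hadj⟩, rfl⟩
      · refine ⟨a, Finset.mem_filter.2 ⟨hset a (by simp [Sym2.mem_iff]), hadj.symm⟩, ?_⟩
        rw [Sym2.eq_swap]
  rw [Finset.sum_congr rfl h1, sum_filter_card_comm]
  have h2 : ∀ e ∈ onE G A, (A.filter (fun v => v ∈ e)).card = 2 := by
    intro e hemem
    rw [mem_onE] at hemem
    obtain ⟨a, b, hab, hadj, rfl⟩ := edge_ends G hemem.1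
    rw [card_filter_mem_edge hab]
    rw [if_pos (hemem.2 a (by simp [Sym2.mem_iff])), if_pos (hemem.2 b (by simp [Sym2.mem_iff]))]
  rw [Finset.sum_congr rfl h2, Finset.sum_const, smul_eq_mul, mul_comm]

lemma card_onE_le_choose (A : Finset V) : (onE G A).card ≤ A.card.choose 2 := by
  classical
  have h : onE G A ⊆ A.sym2.filter (fun e => ¬ e.IsDiag) := by
    intro e hemem
    rw [mem_onE] at hemem
    obtain ⟨a, b, hab, hadj, rfl⟩ := edge_ends G hemem.1
    rw [Finset.mem_filter, Finset.mk_mem_sym2_iff]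
    refine ⟨⟨hemem.2 a (by simp [Sym2.mem_iff]), hemem.2 b (by simp [Sym2.mem_iff])⟩, ?_⟩
    simp [Sym2.isDiag_iff_proj_eq, hab]
  calc (onE G A).card ≤ (A.sym2.filter (fun e => ¬ e.IsDiag)).card := Finset.card_le_card h
  _ = A.card.choose 2 := by
      have hdiag : A.sym2.filter (fun e => e.IsDiag) = A.image Sym2.diag := by
        ext e
        induction e with
        | _ x y =>
          simp only [Finset.mem_filter, Finset.mk_mem_sym2_iff, Finset.mem_image]
          constructor
          · rintro ⟨⟨hx, hy⟩, hd⟩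
            rw [Sym2.mk_isDiag_iff] at hd
            exact ⟨x, hx, by rw [hd]; rfl⟩
          · rintro ⟨a, ha, heq⟩
            have h1' : x = a ∧ y = a := by
              have := heq.symm
              rw [Sym2.diag, Sym2.eq_iff] at this
              tauto
            obtain ⟨rfl, rfl⟩ := h1'
            exact ⟨⟨ha, ha⟩, Sym2.mk_isDiag_iff.2 rfl⟩
      have hcards := Finset.card_filter_add_card_filter_not
        (s := A.sym2) (p := fun e => e.IsDiag)
      rw [hdiag, Finset.card_image_of_injective _ Sym2.diag_injective] at hcards
      have hs2 : A.sym2.card = (A.card + 1).choose 2 := Finset.card_sym2 A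
      have hch : (A.card + 1).choose 2 = A.card.choose 2 + A.card := by
        rw [Nat.choose_succ_succ]
        simp [Nat.choose_one_right, Nat.add_comm]
      omega

/-- The degree-sum identity over a vertex subset `s` (with global edges). -/
lemma sum_degree_split (s : Finset V) :
    ∑ v ∈ s, G.degree v
      = 2 * (G.edgeFinset.filter (fun e => ∀ x ∈ e, x ∈ s)).card
        + (G.edgeFinset.filter (fun e => ¬ (∀ x ∈ e, x ∈ s) ∧ ∃ x ∈ e, x ∈ s)).card := by
  have h1 : ∀ v ∈ s, G.degree v = (G.edgeFinset.filter (fun e => v ∈ e)).card :=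
    fun v _ => degree_eq_card_incident G v
  rw [Finset.sum_congr rfl h1, sum_filter_card_comm]
  rw [← Finset.sum_filter_add_sum_filter_not G.edgeFinset (fun e => ∀ x ∈ e, x ∈ s)]
  have h2 : ∀ e ∈ G.edgeFinset.filter (fun e => ∀ x ∈ e, x ∈ s),
      (s.filter (fun v => v ∈ e)).card = 2 := by
    intro e hemem
    rw [Finset.mem_filter, SimpleGraph.mem_edgeFinset] at hemem
    obtain ⟨a, b, hab, hadj, rfl⟩ := edge_ends G hemem.1
    rw [card_filter_mem_edge hab,
      if_pos (hemem.2 a (by simp [Sym2.mem_iff])), if_pos (hemem.2 b (by simp [Sym2.mem_iff]))]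
  rw [Finset.sum_congr rfl h2, Finset.sum_const, smul_eq_mul]
  congr 1
  · rw [mul_comm]
  rw [← Finset.sum_filter_add_sum_filter_not
    (G.edgeFinset.filter (fun e => ¬ ∀ x ∈ e, x ∈ s)) (fun e => ∃ x ∈ e, x ∈ s)]
  have h3 : ∀ e ∈ (G.edgeFinset.filter (fun e => ¬ ∀ x ∈ e, x ∈ s)).filter
      (fun e => ∃ x ∈ e, x ∈ s), (s.filter (fun v => v ∈ e)).card = 1 := by
    intro e hemem
    rw [Finset.mem_filter, Finset.mem_filter, SimpleGraph.mem_edgeFinset] at hemem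
    obtain ⟨⟨hee, hnall⟩, hex⟩ := hemem
    obtain ⟨a, b, hab, hadj, rfl⟩ := edge_ends G hee
    rw [card_filter_mem_edge hab]
    have hnab : ¬ (a ∈ s ∧ b ∈ s) := by
      intro ⟨h1', h2'⟩
      apply hnall
      intro x hx
      rw [Sym2.mem_iff] at hx
      rcases hx with rfl | rfl <;> assumption
    have hor : a ∈ s ∨ b ∈ s := by
      obtain ⟨x, hx, hxs⟩ := hex
      rw [Sym2.mem_iff] at hx
      rcases hx with rfl | rfl
      · exact Or.inl hxs
      · exact Or.inr hxs
    by_cases ha : a ∈ s <;> by_cases hb : b ∈ s <;> simp [ha, hb] at hnab hor ⊢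
  have h4 : ∀ e ∈ (G.edgeFinset.filter (fun e => ¬ ∀ x ∈ e, x ∈ s)).filter
      (fun e => ¬ ∃ x ∈ e, x ∈ s), (s.filter (fun v => v ∈ e)).card = 0 := by
    intro e hemem
    simp only [Finset.mem_filter] at hemem
    rw [Finset.card_eq_zero, Finset.filter_eq_empty_iff]
    intro x hx hxe
    exact hemem.2 ⟨x, hxe, hx⟩
  rw [Finset.sum_congr rfl h3, Finset.sum_congr rfl h4, Finset.sum_const, Finset.sum_const,
    Finset.filter_filter, Finset.filter_filter]
  simp

end Counting


section CaseB

lemma edge_meets_ball {k : ℕ}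
    (h3 : ¬ ContainsCopy (disjUnionGraph (_root_.starGraph (k - 1)) (kMatching 1)) G)
    {v : V} (hv : G.degree v = k - 1) {x y : V} (hxy : G.Adj x y) :
    x = v ∨ y = v ∨ G.Adj v x ∨ G.Adj v y := by
  by_contra hcon
  push_neg at hcon
  obtain ⟨hx, hy, hax, hay⟩ := hcon
  exact no_far_edge G h3 hv hxy hx hax hy hay

lemma vertex_struct {k : ℕ} (hk : 2 ≤ k)
    (h1 : ¬ ContainsCopy (_root_.starGraph k) G)
    (h3 : ¬ ContainsCopy (disjUnionGraph (_root_.starGraph (k - 1)) (kMatching 1)) G)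
    (he : G.edgeFinset.card = (k - 1) ^ 2)
    {v : V} (hv : G.degree v = k - 1) :
    (∀ w ∈ insert v (G.neighborFinset v), G.degree w = k - 1)
      ∧ ∀ w w', G.Adj v w → G.Adj v w' → ¬ G.Adj w w' := by
  set d := k - 1 with hd
  have hd1 : 1 ≤ d := by omega
  set s : Finset V := insert v (G.neighborFinset v) with hs
  have hvs : v ∉ G.neighborFinset v := by
    rw [SimpleGraph.mem_neighborFinset]
    exact G.irrefl
  have hscard : s.card = d + 1 := by
    rw [hs, Finset.card_insert_of_notMem hvs, G.card_neighborFinset_eq_degree, hv]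
  have hdegle : ∀ w : V, G.degree w ≤ d := by
    intro w
    have := degree_lt G h1 w
    omega
  -- every edge meets s
  have hmeets : ∀ e ∈ G.edgeFinset, ∃ x ∈ e, x ∈ s := by
    intro e hee
    rw [SimpleGraph.mem_edgeFinset] at hee
    obtain ⟨a, b, hab, hadj, rfl⟩ := edge_ends G hee
    have := edge_meets_ball G h3 hv hadj
    rcases this with rfl | rfl | h | h
    · exact ⟨a, by simp [Sym2.mem_iff], by simp [hs]⟩
    · exact ⟨b, by simp [Sym2.mem_iff], by simp [hs]⟩
    · exact ⟨a, by simp [Sym2.mem_iff], by simp [hs, SimpleGraph.mem_neighborFinset, h]⟩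
    · exact ⟨b, by simp [Sym2.mem_iff], by simp [hs, SimpleGraph.mem_neighborFinset, h]⟩
  set E2 := G.edgeFinset.filter (fun e => ∀ x ∈ e, x ∈ s) with hE2
  set E1 := G.edgeFinset.filter (fun e => ¬ (∀ x ∈ e, x ∈ s) ∧ ∃ x ∈ e, x ∈ s) with hE1
  have hsplit : ∑ w ∈ s, G.degree w = 2 * E2.card + E1.card := sum_degree_split G s
  have hpart : E2.card + E1.card = d ^ 2 := by
    have h0 : G.edgeFinset.filter (fun e => ¬ (∀ x ∈ e, x ∈ s) ∧ ¬ ∃ x ∈ e, x ∈ s) = ∅ := by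
      rw [Finset.filter_eq_empty_iff]
      rintro e hee ⟨-, hno⟩
      exact hno (hmeets e hee)
    have hp1 := Finset.card_filter_add_card_filter_not
      (s := G.edgeFinset) (p := fun e => ∀ x ∈ e, x ∈ s)
    have hp2 := Finset.card_filter_add_card_filter_not
      (s := G.edgeFinset.filter (fun e => ¬ (∀ x ∈ e, x ∈ s))) (p := fun e => ∃ x ∈ e, x ∈ s)
    rw [Finset.filter_filter, Finset.filter_filter, h0, Finset.card_empty] at hp2
    rw [hE2, hE1, ← he]
    omega
  have hsum_le : ∑ w ∈ s, G.degree w ≤ (d + 1) * d := by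
    calc ∑ w ∈ s, G.degree w ≤ s.card * d :=
      Finset.sum_le_card_nsmul s _ d (fun w _ => hdegle w)
    _ = (d + 1) * d := by rw [hscard]
  -- the star edges
  set star := (G.neighborFinset v).image (fun w => s(v, w)) with hstar
  have hstarcard : star.card = d := by
    rw [hstar, Finset.card_image_of_injective, G.card_neighborFinset_eq_degree, hv]
    intro w w' h
    rw [Sym2.eq_iff] at h
    rcases h with ⟨-, h⟩ | ⟨h1', h2⟩
    · exact h
    · exact h2.trans h1'
  have hstarsub : star ⊆ E2 := by
    intro e hemem
    rw [hstar, Finset.mem_image] at hemem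
    obtain ⟨w, hw, rfl⟩ := hemem
    rw [SimpleGraph.mem_neighborFinset] at hw
    rw [hE2, Finset.mem_filter, SimpleGraph.mem_edgeFinset]
    refine ⟨hw, ?_⟩
    intro x hx
    rw [Sym2.mem_iff] at hx
    rcases hx with rfl | rfl
    · simp [hs]
    · simp [hs, SimpleGraph.mem_neighborFinset, hw]
  have hE2ge : d ≤ E2.card := hstarcard ▸ Finset.card_le_card hstarsub
  have hdd : (d + 1) * d = d ^ 2 + d := by ring
  have hE2eq : E2.card = d := by omega
  have hsum_eq : ∑ w ∈ s, G.degree w = (d + 1) * d := by omega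
  have hstareq : star = E2 := Finset.eq_of_subset_of_card_le hstarsub (by omega)
  constructor
  · -- all degrees in the ball are d
    intro w hw
    by_contra hne
    have hwlt : G.degree w ≤ d - 1 := by
      have := hdegle w
      omega
    have herase : ∑ x ∈ s.erase w, G.degree x + G.degree w = ∑ x ∈ s, G.degree x :=
      Finset.sum_erase_add s _ hw
    have h1' : ∑ x ∈ s.erase w, G.degree x ≤ (s.erase w).card * d :=
      Finset.sum_le_card_nsmul _ _ d (fun x _ => hdegle x)
    have hec : (s.erase w).card = d := by
      rw [Finset.card_erase_of_mem hw, hscard]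
      omega
    rw [hec] at h1'
    have hdd2 : d * d = d ^ 2 := (sq d).symm
    omega
  · -- independence of the neighbourhood
    intro w w' hvw hvw' hww'
    have hwne : w ≠ v := fun h => G.irrefl (h ▸ hvw)
    have hw'ne : w' ≠ v := fun h => G.irrefl (h ▸ hvw')
    have hmem : s(w, w') ∈ E2 := by
      rw [hE2, Finset.mem_filter, SimpleGraph.mem_edgeFinset]
      refine ⟨hww', ?_⟩
      intro x hx
      rw [Sym2.mem_iff] at hx
      rcases hx with rfl | rfl
      · simp [hs, SimpleGraph.mem_neighborFinset, hvw]
      · simp [hs, SimpleGraph.mem_neighborFinset, hvw']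
    rw [← hstareq, hstar, Finset.mem_image] at hmem
    obtain ⟨u, hu, hequ⟩ := hmem
    rw [Sym2.eq_iff] at hequ
    rcases hequ with ⟨h1', -⟩ | ⟨h2, -⟩
    · exact hwne h1'.symm
    · exact hw'ne h2.symm

lemma caseB {k : ℕ} (hk : 2 ≤ k)
    (hiso : ∀ v : V, 0 < G.degree v)
    (h1 : ¬ ContainsCopy (_root_.starGraph k) G)
    (h3 : ¬ ContainsCopy (disjUnionGraph (_root_.starGraph (k - 1)) (kMatching 1)) G)
    (he : G.edgeFinset.card = (k - 1) ^ 2)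
    {v : V} (hv : G.degree v = k - 1) :
    Nonempty (G ≃g completeBipartiteGraph (Fin (k - 1)) (Fin (k - 1))) := by
  set d := k - 1 with hd
  have hd1 : 1 ≤ d := by omega
  -- every vertex has degree d
  have hdeg_all : ∀ z : V, G.degree z = d := by
    intro z
    by_cases hz : z ∈ insert v (G.neighborFinset v)
    · exact (vertex_struct G hk h1 h3 he hv).1 z hz
    · simp only [Finset.mem_insert, SimpleGraph.mem_neighborFinset] at hz
      push_neg at hz
      obtain ⟨hzv, hzadj⟩ := hz
      obtain ⟨y, hy⟩ := Finset.card_pos.mp (by rw [G.card_neighborFinset_eq_degree]; exact hiso z)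
      rw [SimpleGraph.mem_neighborFinset] at hy
      rcases edge_meets_ball G h3 hv hy with rfl | rfl | h | h
      · exact absurd rfl hzv
      · exact absurd hy.symm hzadj
      · exact absurd h hzadj
      · have hyd : G.degree y = d := (vertex_struct G hk h1 h3 he hv).1 y
          (by simp [Finset.mem_insert, SimpleGraph.mem_neighborFinset, h])
        exact (vertex_struct G hk h1 h3 he hyd).1 z
          (by simp [Finset.mem_insert, SimpleGraph.mem_neighborFinset, hy.symm])
  -- the number of vertices is 2d
  have hn : Fintype.card V = 2 * d := by
    have hsum := G.sum_degrees_eq_twice_card_edges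
    rw [he] at hsum
    have : ∑ z : V, G.degree z = Fintype.card V * d := by
      rw [Finset.sum_congr rfl (fun z _ => hdeg_all z), Finset.sum_const, smul_eq_mul,
        Finset.card_univ]
    rw [this] at hsum
    have h2d : Fintype.card V * d = (2 * d) * d := by
      rw [hsum]; ring
    exact Nat.eq_of_mul_eq_mul_right (by omega) h2d
  set A := G.neighborFinset v with hA
  have hAcard : A.card = d := by rw [hA, G.card_neighborFinset_eq_degree, hv]
  have hAindep : ∀ w ∈ A, ∀ w' ∈ A, ¬ G.Adj w w' := by
    intro w hw w' hw' hadj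
    rw [hA, SimpleGraph.mem_neighborFinset] at hw hw'
    exact (vertex_struct G hk h1 h3 he hv).2 w w' hw hw' hadj
  have hNB : ∀ w ∈ A, G.neighborFinset w = Aᶜ := by
    intro w hw
    have hsub : G.neighborFinset w ⊆ Aᶜ := by
      intro x hx
      rw [SimpleGraph.mem_neighborFinset] at hx
      rw [Finset.mem_compl]
      intro hxA
      exact hAindep w hw x hxA hx
    apply Finset.eq_of_subset_of_card_le hsub
    rw [Finset.card_compl, hAcard, hn, G.card_neighborFinset_eq_degree, hdeg_all]
    omega
  have hAB : ∀ w ∈ A, ∀ z, z ∉ A → G.Adj w z := by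
    intro w hw z hz
    have := hNB w hw
    have hzmem : z ∈ G.neighborFinset w := by rw [this, Finset.mem_compl]; exact hz
    rw [SimpleGraph.mem_neighborFinset] at hzmem
    exact hzmem
  have hBindep : ∀ z, z ∉ A → ∀ z', z' ∉ A → ¬ G.Adj z z' := by
    intro z hz z' hz' hadj
    have hsub : insert z' A ⊆ G.neighborFinset z := by
      intro x hx
      rw [Finset.mem_insert] at hx
      rw [SimpleGraph.mem_neighborFinset]
      rcases hx with rfl | hx
      · exact hadj
      · exact (hAB x hx z hz).symm
    have hcard := Finset.card_le_card hsub
    rw [Finset.card_insert_of_notMem hz', hAcard, G.card_neighborFinset_eq_degree,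
      hdeg_all] at hcard
    omega
  have hadj_iff : ∀ x y : V, G.Adj x y ↔ ((x ∈ A ∧ y ∉ A) ∨ (x ∉ A ∧ y ∈ A)) := by
    intro x y
    constructor
    · intro hadj
      by_cases hx : x ∈ A <;> by_cases hy : y ∈ A
      · exact absurd hadj (hAindep x hx y hy)
      · exact Or.inl ⟨hx, hy⟩
      · exact Or.inr ⟨hx, hy⟩
      · exact absurd hadj (hBindep x hx y hy)
    · rintro (⟨hx, hy⟩ | ⟨hx, hy⟩)
      · exact hAB x hx y hy
      · exact (hAB y hy x hx).symm
  -- build the isomorphism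
  have hcA : Fintype.card { x // x ∈ A } = d := by rw [Fintype.card_coe]; exact hAcard
  have hcB : Fintype.card { x // ¬ x ∈ A } = d := by
    have h := Fintype.card_subtype_compl (fun x : V => x ∈ A)
    rw [h, hn, hcA]
    omega
  have eA : { x // x ∈ A } ≃ Fin d := Fintype.equivFinOfCardEq hcA
  have eB : { x // ¬ x ∈ A } ≃ Fin d := Fintype.equivFinOfCardEq hcB
  set e : V ≃ (Fin d ⊕ Fin d) :=
    (Equiv.sumCompl (fun x => x ∈ A)).symm.trans (Equiv.sumCongr eA eB) with hee
  have hexA : ∀ (x : V) (hx : x ∈ A), e x = Sum.inl (eA ⟨x, hx⟩) := by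
    intro x hx
    rw [hee]
    simp [Equiv.sumCompl_symm_apply_of_pos hx]
  have hexB : ∀ (x : V) (hx : ¬ x ∈ A), e x = Sum.inr (eB ⟨x, hx⟩) := by
    intro x hx
    rw [hee]
    simp [Equiv.sumCompl_symm_apply_of_neg hx]
  refine ⟨⟨e, ?_⟩⟩
  intro x y
  show (completeBipartiteGraph (Fin d) (Fin d)).Adj (e x) (e y) ↔ G.Adj x y
  rw [hadj_iff x y]
  by_cases hx : x ∈ A <;> by_cases hy : y ∈ A
  · rw [hexA x hx, hexA y hy]
    simp [completeBipartiteGraph_adj, hx, hy]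
  · rw [hexA x hx, hexB y hy]
    simp [completeBipartiteGraph_adj, hx, hy]
  · rw [hexB x hx, hexA y hy]
    simp [completeBipartiteGraph_adj, hx, hy]
  · rw [hexB x hx, hexB y hy]
    simp [completeBipartiteGraph_adj, hx, hy]

end CaseB


section CaseCInfra

lemma adj_mem_onE {A : Finset V} {v w : V} (hv : v ∈ A) (hw : w ∈ A) (h : G.Adj v w) :
    s(v, w) ∈ onE G A := by
  rw [mem_onE]
  refine ⟨h, ?_⟩
  intro x hx
  rw [Sym2.mem_iff] at hx
  rcases hx with rfl | rfl <;> assumption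

lemma degOn_zero_of_onE_empty {A : Finset V} (h : onE G A = ∅) {v : V} (hv : v ∈ A) :
    degOn G A v = 0 := by
  rw [degOn, Finset.card_eq_zero, Finset.filter_eq_empty_iff]
  intro w hw hadj
  have := adj_mem_onE G hv hw hadj
  rw [h] at this
  exact absurd this (Finset.notMem_empty _)

lemma onE_card_le_erase (A : Finset V) (v : V) :
    (onE G A).card ≤ (onE G (A.erase v)).card + degOn G A v := by
  classical
  have hsub : onE G A ⊆ onE G (A.erase v) ∪ ((A.filter (fun w => G.Adj v w)).image (fun w => s(v, w))) := by
    intro e hemem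
    rw [mem_onE] at hemem
    obtain ⟨a, b, hab, hadj, rfl⟩ := edge_ends G hemem.1
    have ha : a ∈ A := hemem.2 a (by simp [Sym2.mem_iff])
    have hb : b ∈ A := hemem.2 b (by simp [Sym2.mem_iff])
    rw [Finset.mem_union]
    by_cases hva : v = a
    · right
      rw [Finset.mem_image]
      exact ⟨b, Finset.mem_filter.2 ⟨hb, hva ▸ hadj⟩, by rw [hva]⟩
    by_cases hvb : v = b
    · right
      rw [Finset.mem_image]
      exact ⟨a, Finset.mem_filter.2 ⟨ha, hvb ▸ hadj.symm⟩, by rw [hvb, Sym2.eq_swap]⟩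
    · left
      rw [mem_onE]
      refine ⟨hemem.1, ?_⟩
      intro x hx
      rw [Sym2.mem_iff] at hx
      rcases hx with rfl | rfl
      · exact Finset.mem_erase.2 ⟨fun h => hva h.symm, ha⟩
      · exact Finset.mem_erase.2 ⟨fun h => hvb h.symm, hb⟩
  calc (onE G A).card ≤ _ := Finset.card_le_card hsub
  _ ≤ (onE G (A.erase v)).card + ((A.filter (fun w => G.Adj v w)).image (fun w => s(v, w))).card :=
      Finset.card_union_le _ _
  _ ≤ (onE G (A.erase v)).card + degOn G A v := by
      have := Finset.card_image_le (s := A.filter (fun w => G.Adj v w)) (f := fun w => s(v, w))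
      rw [degOn]
      omega

lemma nuOn_pos {A : Finset V} {e : Sym2 V} (he : e ∈ onE G A) : 1 ≤ nuOn G A := by
  have hm : MOn G A {e} := by
    refine ⟨⟨?_, ?_⟩, ?_⟩
    · intro f hf
      rw [Finset.mem_singleton] at hf
      subst hf
      exact (mem_onE G A).1 he |>.1
    · intro f hf g hg hne
      rw [Finset.mem_singleton] at hf hg
      exact absurd (hf.trans hg.symm) hne
    · intro f hf
      rw [Finset.mem_singleton] at hf
      subst hf
      exact he
  have := MOn.card_le G hm
  simpa using this

lemma onE_subset {A B : Finset V} (h : A ⊆ B) : onE G A ⊆ onE G B := by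
  intro e hemem
  rw [mem_onE] at hemem ⊢
  exact ⟨hemem.1, fun x hx => h (hemem.2 x hx)⟩

lemma matching_union {A B : Finset V} {M N : Finset (Sym2 V)} (hAB : Disjoint A B)
    (hM : MOn G A M) (hN : MOn G B N) :
    MOn G (A ∪ B) (M ∪ N) ∧ Disjoint M N := by
  have hvert : ∀ e ∈ M, ∀ x ∈ e, x ∈ A := by
    intro e hemem x hx
    have := hM.2 hemem
    rw [mem_onE] at this
    exact this.2 x hx
  have hvert' : ∀ e ∈ N, ∀ x ∈ e, x ∈ B := by
    intro e hemem x hx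
    have := hN.2 hemem
    rw [mem_onE] at this
    exact this.2 x hx
  have hdis : Disjoint M N := by
    rw [Finset.disjoint_left]
    intro e heM heN
    obtain ⟨a, b, hab, hadj, rfl⟩ := edge_ends G (hM.1.1 e heM)
    have h1' := hvert _ heM a (by simp [Sym2.mem_iff])
    have h2' := hvert' _ heN a (by simp [Sym2.mem_iff])
    exact Finset.disjoint_left.1 hAB h1' h2'
  refine ⟨⟨⟨?_, ?_⟩, ?_⟩, hdis⟩
  · intro e hemem
    rw [Finset.mem_union] at hemem
    rcases hemem with h | h
    · exact hM.1.1 e h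
    · exact hN.1.1 e h
  · intro e hemem f hfmem hne x hx hxf
    rw [Finset.mem_union] at hemem hfmem
    rcases hemem with h | h <;> rcases hfmem with h' | h'
    · exact hM.1.2 e h f h' hne x hx hxf
    · exact Finset.disjoint_left.1 hAB (hvert _ h x hx) (hvert' _ h' x hxf)
    · exact Finset.disjoint_left.1 hAB (hvert _ h' x hxf) (hvert' _ h x hx)
    · exact hN.1.2 e h f h' hne x hx hxf
  · intro e hemem
    rw [Finset.mem_union] at hemem
    rcases hemem with h | h
    · exact onE_subset G Finset.subset_union_left (hM.2 h)
    · exact onE_subset G Finset.subset_union_right (hN.2 h)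

/-- Splitting along a part with no crossing edges. -/
lemma nuOn_split {A B : Finset V} (hBA : B ⊆ A)
    (hnc : ∀ x ∈ B, ∀ y ∈ A \ B, ¬ G.Adj x y) :
    nuOn G A = nuOn G B + nuOn G (A \ B) := by
  classical
  have hdisj : Disjoint B (A \ B) := Finset.disjoint_sdiff
  have hunion : B ∪ (A \ B) = A := Finset.union_sdiff_of_subset hBA
  -- edge dichotomy
  have hedge : ∀ e ∈ onE G A, (∀ x ∈ e, x ∈ B) ∨ (∀ x ∈ e, x ∈ A \ B) := by
    intro e hemem
    rw [mem_onE] at hemem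
    obtain ⟨a, b, hab, hadj, rfl⟩ := edge_ends G hemem.1
    have ha : a ∈ A := hemem.2 a (by simp [Sym2.mem_iff])
    have hb : b ∈ A := hemem.2 b (by simp [Sym2.mem_iff])
    by_cases haB : a ∈ B <;> by_cases hbB : b ∈ B
    · left
      intro x hx
      rw [Sym2.mem_iff] at hx
      rcases hx with rfl | rfl <;> assumption
    · exact absurd hadj (hnc a haB b (Finset.mem_sdiff.2 ⟨hb, hbB⟩))
    · exact absurd hadj.symm (hnc b hbB a (Finset.mem_sdiff.2 ⟨ha, haB⟩))
    · right
      intro x hx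
      rw [Sym2.mem_iff] at hx
      rcases hx with rfl | rfl <;> exact Finset.mem_sdiff.2 ⟨by assumption, by assumption⟩
  apply le_antisymm
  · obtain ⟨M, hM, hMc⟩ := exists_max_matching G A
    rw [← hMc]
    set MB := M.filter (fun e => ∀ x ∈ e, x ∈ B) with hMB
    set MC := M.filter (fun e => ∀ x ∈ e, x ∈ A \ B) with hMC
    have hMBon : MOn G B MB := by
      refine ⟨matching_subset G hM.1 (Finset.filter_subset _ _), ?_⟩
      intro e hemem
      rw [hMB, Finset.mem_filter] at hemem
      rw [mem_onE]
      exact ⟨(mem_onE G A).1 (hM.2 hemem.1) |>.1, hemem.2⟩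
    have hMCon : MOn G (A \ B) MC := by
      refine ⟨matching_subset G hM.1 (Finset.filter_subset _ _), ?_⟩
      intro e hemem
      rw [hMC, Finset.mem_filter] at hemem
      rw [mem_onE]
      exact ⟨(mem_onE G A).1 (hM.2 hemem.1) |>.1, hemem.2⟩
    have hcover : M = MB ∪ MC := by
      apply Finset.Subset.antisymm
      · intro e hemem
        rcases hedge e (hM.2 hemem) with h | h
        · exact Finset.mem_union_left _ (Finset.mem_filter.2 ⟨hemem, h⟩)
        · exact Finset.mem_union_right _ (Finset.mem_filter.2 ⟨hemem, h⟩)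
      · exact Finset.union_subset (Finset.filter_subset _ _) (Finset.filter_subset _ _)
    have hdisBC : Disjoint MB MC := by
      rw [Finset.disjoint_left]
      intro e heB heC
      rw [hMB, Finset.mem_filter] at heB
      rw [hMC, Finset.mem_filter] at heC
      obtain ⟨a, b, hab, hadj, heq⟩ := edge_ends G (hM.1.1 e heB.1)
      have h1' := heB.2 a (by rw [heq]; simp [Sym2.mem_iff])
      have h2' := heC.2 a (by rw [heq]; simp [Sym2.mem_iff])
      exact (Finset.mem_sdiff.1 h2').2 h1'
    calc M.card = MB.card + MC.card := by
          rw [hcover, Finset.card_union_of_disjoint hdisBC]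
    _ ≤ nuOn G B + nuOn G (A \ B) :=
          Nat.add_le_add (MOn.card_le G hMBon) (MOn.card_le G hMCon)
  · obtain ⟨MB, hMB, hMBc⟩ := exists_max_matching G B
    obtain ⟨MC, hMC, hMCc⟩ := exists_max_matching G (A \ B)
    obtain ⟨hun, hdis⟩ := matching_union G hdisj hMB hMC
    rw [hunion] at hun
    have := MOn.card_le G hun
    rw [Finset.card_union_of_disjoint hdis, hMBc, hMCc] at this
    exact this

end CaseCInfra



section Gallai

variable {A : Finset V} {M N : Finset (Sym2 V)}

/-- reachability inside `A` by a walk of length `t` -/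
def ReachIn (G : SimpleGraph V) (A : Finset V) : ℕ → V → V → Prop
  | 0 => fun x y => x = y
  | (t+1) => fun x y => ∃ z ∈ A, G.Adj x z ∧ ReachIn G A t z y

lemma reachIn_snoc {t : ℕ} {u x y : V} (h : ReachIn G A t u x) (hy : y ∈ A)
    (hadj : G.Adj x y) : ReachIn G A (t + 1) u y := by
  induction t generalizing u with
  | zero =>
    rw [ReachIn] at h
    subst h
    exact ⟨y, hy, hadj, rfl⟩
  | succ t IH =>
    obtain ⟨p, hp, hup, hrest⟩ := h
    exact ⟨p, hp, hup, IH hrest⟩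

lemma conn_reach (hconn : ∀ B ⊆ A, B.Nonempty → B ≠ A → ∃ x ∈ B, ∃ y ∈ A \ B, G.Adj x y)
    {u w : V} (hu : u ∈ A) (hw : w ∈ A) : ∃ t, ReachIn G A t u w := by
  classical
  set B := A.filter (fun y => ∃ t, ReachIn G A t u y) with hB
  have huB : u ∈ B := by
    rw [hB, Finset.mem_filter]
    exact ⟨hu, 0, rfl⟩
  by_cases hBA : B = A
  · have : w ∈ B := by rw [hBA]; exact hw
    rw [hB, Finset.mem_filter] at this
    exact this.2
  · exfalso
    obtain ⟨p, hp, q, hq, hadj⟩ := hconn B (Finset.filter_subset _ _) ⟨u, huB⟩ hBA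
    rw [hB, Finset.mem_filter] at hp
    obtain ⟨hpA, t, ht⟩ := hp
    rw [Finset.mem_sdiff] at hq
    apply hq.2
    rw [hB, Finset.mem_filter]
    exact ⟨hq.1, t + 1, reachIn_snoc G ht hq.1 hadj⟩

/-- the partner of `v` in a matching (or `v` itself if unmatched) -/
noncomputable def mate (M : Finset (Sym2 V)) (v : V) : V :=
  if h : ∃ w, w ≠ v ∧ s(v, w) ∈ M then h.choose else v


lemma mate_spec {v : V} (h : mate M v ≠ v) : s(v, mate M v) ∈ M := by
  rw [mate] at h ⊢
  split_ifs at h ⊢ with hex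
  · exact hex.choose_spec.2
  · exact absurd rfl h

lemma mate_ne (hM : IsMatchingSet G M) {v : V} {e : Sym2 V} (he : e ∈ M) (hv : v ∈ e) :
    mate M v ≠ v := by
  obtain ⟨a, b, hab, hadj, rfl⟩ := edge_ends G (hM.1 e he)
  have hex : ∃ w, w ≠ v ∧ s(v, w) ∈ M := by
    rw [Sym2.mem_iff] at hv
    rcases hv with rfl | rfl
    · exact ⟨b, fun h => hab h.symm, he⟩
    · exact ⟨a, fun h => hab h, by rwa [Sym2.eq_swap]⟩
  rw [mate, dif_pos hex]
  exact hex.choose_spec.1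


lemma mate_unique (hM : IsMatchingSet G M) {v w : V} (hw : w ≠ v) (he : s(v, w) ∈ M) :
    mate M v = w := by
  have hex : ∃ w', w' ≠ v ∧ s(v, w') ∈ M := ⟨w, hw, he⟩
  rw [mate, dif_pos hex]
  obtain ⟨hne, hmem⟩ := hex.choose_spec
  by_contra hcon
  have := hM.2 _ hmem _ he (fun h => hcon (by
    rw [Sym2.eq_iff] at h
    rcases h with ⟨-, h⟩ | ⟨-, h2⟩
    · exact h
    · exact absurd h2 hne)) v (by simp [Sym2.mem_iff]) (by simp [Sym2.mem_iff])
  exact this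


lemma mate_invol (hM : IsMatchingSet G M) {v : V} (h : mate M v ≠ v) :
    mate M (mate M v) = v := by
  have hmem := mate_spec h
  apply mate_unique G hM (fun hh => h hh.symm)
  rwa [Sym2.eq_swap]

lemma mate_mem_A (hM : MOn G A M) {v : V} (h : mate M v ≠ v) : mate M v ∈ A := by
  have hmem := mate_spec h
  have := hM.2 hmem
  rw [mem_onE] at this
  exact this.2 _ (by simp [Sym2.mem_iff])

/-- augmenting by one edge whose two ends are exposed -/
lemma aug_contra (hM : MOn G A M) (hMmax : M.card = nuOn G A) {u w : V}
    (hu : u ∈ A) (hw : w ∈ A) (hadj : G.Adj u w)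
    (hue : ∀ e ∈ M, u ∉ e) (hwe : ∀ e ∈ M, w ∉ e) : False := by
  have hnm : s(u, w) ∉ M := fun h => hue _ h (by simp [Sym2.mem_iff])
  have hM' : MOn G A (insert s(u, w) M) := by
    refine ⟨⟨?_, ?_⟩, ?_⟩
    · intro e he
      rw [Finset.mem_insert] at he
      rcases he with rfl | he
      · exact hadj
      · exact hM.1.1 e he
    · intro e he f hf hne v hv hvf
      rw [Finset.mem_insert] at he hf
      rcases he with rfl | he <;> rcases hf with rfl | hf
      · exact hne rfl
      · rw [Sym2.mem_iff] at hv
        rcases hv with rfl | rfl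
        · exact hue f hf hvf
        · exact hwe f hf hvf
      · rw [Sym2.mem_iff] at hvf
        rcases hvf with rfl | rfl
        · exact hue e he hv
        · exact hwe e he hv
      · exact hM.1.2 e he f hf hne v hv hvf
    · intro e he
      rw [Finset.mem_insert] at he
      rcases he with rfl | he
      · exact adj_mem_onE G hu hw hadj
      · exact hM.2 he
  have hcard := MOn.card_le G hM'
  rw [Finset.card_insert_of_notMem hnm, hMmax] at hcard
  omega


lemma card_exposed {A : Finset V} {M : Finset (Sym2 V)} (h : MOn G A M) :
    (A.filter (fun x => ∀ e ∈ M, x ∉ e)).card = A.card - 2 * M.card := by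
  have hcov := card_covered G h.1
  have heq : A.filter (fun x => ∃ e ∈ M, x ∈ e)
      = Finset.univ.filter (fun x : V => ∃ e ∈ M, x ∈ e) := by
    ext x
    simp only [Finset.mem_filter, Finset.mem_univ, true_and]
    constructor
    · exact fun h' => h'.2
    · intro h'
      obtain ⟨e, he, hxe⟩ := h'
      exact ⟨((mem_onE G A).1 (h.2 he)).2 x hxe, e, he, hxe⟩
  have hpart := Finset.card_filter_add_card_filter_not
    (s := A) (p := fun x => ∃ e ∈ M, x ∈ e)
  have hiff : A.filter (fun x => ¬ ∃ e ∈ M, x ∈ e) = A.filter (fun x => ∀ e ∈ M, x ∉ e) := by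
    apply Finset.filter_congr
    intro x _
    push_neg
    rfl
  rw [hiff] at hpart
  rw [heq] at hpart
  omega


lemma gallai (A : Finset V)
    (hconn : ∀ B ⊆ A, B.Nonempty → B ≠ A → ∃ x ∈ B, ∃ y ∈ A \ B, G.Adj x y)
    (hness : ∀ v ∈ A, nuOn G A ≤ nuOn G (A.erase v)) :
    A.card ≤ 2 * nuOn G A + 1 := by
  classical
  by_contra hbig
  push_neg at hbig
  -- the minimal distance between two exposed vertices of a maximum matching
  have hQex : ∃ t, ∃ M u w, (MOn G A M ∧ M.card = nuOn G A) ∧ u ∈ A ∧ w ∈ A ∧ u ≠ w ∧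
      (∀ e ∈ M, u ∉ e) ∧ (∀ e ∈ M, w ∉ e) ∧ ReachIn G A t u w := by
    obtain ⟨M, hM, hMc⟩ := exists_max_matching G A
    have hexp := card_exposed G hM
    have h2 : 2 ≤ (A.filter (fun y => ∀ e ∈ M, y ∉ e)).card := by
      have := two_mul_card_le G hM
      omega
    obtain ⟨u, hu, w, hw, huw⟩ := Finset.one_lt_card.1
      (show 1 < (A.filter (fun y => ∀ e ∈ M, y ∉ e)).card by omega)
    rw [Finset.mem_filter] at hu hw
    obtain ⟨t, ht⟩ := conn_reach G hconn hu.1 hw.1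
    exact ⟨t, M, u, w, ⟨hM, hMc⟩, hu.1, hw.1, huw, hu.2, hw.2, ht⟩
  obtain ⟨M, u, w, ⟨hM, hMc⟩, huA, hwA, huw, hue, hwe, hreach⟩ := Nat.find_spec hQex
  have hmin : ∀ t', t' < Nat.find hQex → ¬ (∃ M u w, (MOn G A M ∧ M.card = nuOn G A) ∧
      u ∈ A ∧ w ∈ A ∧ u ≠ w ∧ (∀ e ∈ M, u ∉ e) ∧ (∀ e ∈ M, w ∉ e) ∧ ReachIn G A t' u w) :=
    fun t' h => Nat.find_min hQex h
  have ht0pos : Nat.find hQex ≠ 0 := by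
    intro h0
    rw [h0] at hreach
    exact huw hreach
  -- peel one step of the walk
  obtain ⟨t1, ht1⟩ : ∃ t1, Nat.find hQex = t1 + 1 := ⟨Nat.find hQex - 1, by omega⟩
  rw [ht1] at hreach
  obtain ⟨z, hzA, hadj_uz, hrest⟩ := hreach
  by_cases hzw : z = w
  · subst hzw
    exact aug_contra G hM hMc huA hzA hadj_uz hue hwe
  have huz : u ≠ z := G.ne_of_adj hadj_uz
  by_cases hzexp : ∀ e ∈ M, z ∉ e
  · -- z is exposed : distance 1 pair contradicts minimality (t0 ≥ 2)
    have ht02 : 2 ≤ Nat.find hQex := by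
      rcases Nat.lt_or_ge (Nat.find hQex) 2 with h | h
      · exfalso
        have h1 : Nat.find hQex = 1 := by omega
        rw [h1] at ht1
        have : t1 = 0 := by omega
        rw [this] at hrest
        exact hzw hrest
      · exact h
    exact hmin 1 (by omega)
      ⟨M, u, z, ⟨hM, hMc⟩, huA, hzA, huz, hue, hzexp, z, hzA, hadj_uz, rfl⟩
  push_neg at hzexp
  obtain ⟨e0, he0, hze0⟩ := hzexp
  have ht02 : 2 ≤ Nat.find hQex := by
    rcases Nat.lt_or_ge (Nat.find hQex) 2 with h | h
    · exfalso
      have h1 : Nat.find hQex = 1 := by omega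
      rw [h1] at ht1
      have : t1 = 0 := by omega
      rw [this] at hrest
      exact hzw hrest
    · exact h
  -- the maximum matching avoiding z
  obtain ⟨N, hN, hNc⟩ := exists_max_matching G (A.erase z)
  have hNA : MOn G A N := ⟨hN.1, fun e he => onE_subset G (Finset.erase_subset _ _) (hN.2 he)⟩
  have hNcard : N.card = nuOn G A := by
    have h1 : N.card ≤ nuOn G A := MOn.card_le G hNA
    have h2 : nuOn G A ≤ N.card := by rw [hNc]; exact hness z hzA
    omega
  have hNz : ∀ e ∈ N, z ∉ e := by
    intro e he hz
    have := hN.2 he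
    rw [mem_onE] at this
    exact (Finset.mem_erase.1 (this.2 z hz)).1 rfl
  -- the alternating walk
  set x : ℕ → V := fun n => Nat.rec z (fun i xi => if Even i then mate M xi else mate N xi) n
    with hxdef
  have hx0 : x 0 = z := rfl
  have hxs : ∀ i, x (i + 1) = if Even i then mate M (x i) else mate N (x i) := fun i => rfl
  have hxA : ∀ i, x i ∈ A := by
    intro i
    induction i with
    | zero => exact hzA
    | succ i IH =>
      rw [hxs i]
      by_cases hev : Even i
      · rw [if_pos hev]
        by_cases hm : mate M (x i) = x i
        · rw [hm]; exact IH
        · exact mate_mem_A G hM hm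
      · rw [if_neg hev]
        by_cases hm : mate N (x i) = x i
        · rw [hm]; exact IH
        · have := mate_mem_A G hN hm
          exact Finset.erase_subset _ _ this
  -- the key invariant
  have key : ∀ j, (∀ i, i < j → x (i + 1) ≠ x i) →
      (∀ i2, i2 ≤ j → ∀ i1, i1 < i2 → x i1 ≠ x i2) ∧
      (∀ i, i < j →
        (Even i → s(x i, x (i+1)) ∈ M ∧ s(x i, x (i+1)) ∉ N) ∧
        (¬ Even i → s(x i, x (i+1)) ∈ N ∧ s(x i, x (i+1)) ∉ M)) := by
    intro j
    induction j with
    | zero =>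
      intro _
      exact ⟨fun i2 h2 i1 h1 => by omega, fun i h => by omega⟩
    | succ j IH =>
      intro hns
      obtain ⟨hdist, hedge⟩ := IH (fun i hi => hns i (by omega))
      have hnsj : x (j + 1) ≠ x j := hns j (by omega)
      -- edge invariant at step j
      have hedgej : (Even j → s(x j, x (j+1)) ∈ M ∧ s(x j, x (j+1)) ∉ N) ∧
          (¬ Even j → s(x j, x (j+1)) ∈ N ∧ s(x j, x (j+1)) ∉ M) := by
        constructor
        · intro hev
          have hxj1 : x (j+1) = mate M (x j) := by rw [hxs j, if_pos hev]
          have hmem : s(x j, x (j+1)) ∈ M := by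
            have h1 := mate_spec (M := M) (v := x j) (by rw [← hxj1]; exact hnsj)
            rwa [← hxj1] at h1
          refine ⟨hmem, ?_⟩
          intro hmemN
          rcases Nat.eq_zero_or_pos j with rfl | hjpos
          · exact hNz _ hmemN (by rw [← hx0]; simp [Sym2.mem_iff])
          · have hodd : ¬ Even (j - 1) := by
              rw [Nat.even_iff] at hev ⊢
              omega
            have hprev := (hedge (j-1) (by omega)).2 hodd
            have hj1 : j - 1 + 1 = j := by omega
            rw [hj1] at hprev
            by_cases heq : s(x (j-1), x j) = s(x j, x (j+1))
            · rw [heq] at hprev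
              exact hprev.2 hmem
            · exact hN.1.2 _ hprev.1 _ hmemN heq (x j)
                (by simp [Sym2.mem_iff]) (by simp [Sym2.mem_iff])
        · intro hev
          have hxj1 : x (j+1) = mate N (x j) := by rw [hxs j, if_neg hev]
          have hmem : s(x j, x (j+1)) ∈ N := by
            have h1 := mate_spec (M := N) (v := x j) (by rw [← hxj1]; exact hnsj)
            rwa [← hxj1] at h1
          refine ⟨hmem, ?_⟩
          intro hmemM
          have hjodd : j % 2 = 1 := by
            rcases Nat.even_or_odd j with h' | h'
            · exact absurd h' hev
            · exact Nat.odd_iff.1 h'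
          have hevp : Even (j - 1) := Nat.even_iff.2 (by omega)
          have hprev := (hedge (j-1) (by omega)).1 hevp
          have hj1 : j - 1 + 1 = j := by omega
          rw [hj1] at hprev
          by_cases heq : s(x (j-1), x j) = s(x j, x (j+1))
          · rw [heq] at hprev
            exact hprev.2 hmem
          · exact hM.1.2 _ hprev.1 _ hmemM heq (x j)
              (by simp [Sym2.mem_iff]) (by simp [Sym2.mem_iff])
      have hxne_lt : ∀ i1 i2, i1 ≤ j → i2 ≤ j → i1 ≠ i2 → x i1 ≠ x i2 := by
        intro i1 i2 h1 h2 hne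
        rcases Nat.lt_or_ge i1 i2 with h | h
        · exact fun hc => hdist i2 h2 i1 h hc
        · exact fun hc => hdist i1 h1 i2 (by omega) hc.symm
      have hnew : ∀ i, i ≤ j → x i ≠ x (j + 1) := by
        intro i hi hcon
        have hijne : i ≠ j := by
          intro h
          subst h
          exact hnsj hcon.symm
        have hij : i < j := by omega
        by_cases hev : Even j
        · have hEj := hedgej.1 hev
          rcases Nat.eq_zero_or_pos i with rfl | hipos
          · have h1 : x (j+1) = mate M (x j) := by rw [hxs j, if_pos hev]
            have h2 : mate M (x (j+1)) = x j := by
              rw [h1]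
              exact mate_invol G hM.1 (by rw [← h1]; exact hnsj)
            have h3 : x 1 = mate M (x 0) := by
              have h := hxs 0
              rw [if_pos Even.zero] at h
              exact h
            have h4 : x j = x 1 := by rw [h3, hcon, h2]
            have hj2 : 2 ≤ j := by
              have := Nat.even_iff.1 hev
              omega
            exact hxne_lt 1 j (by omega) (le_refl j) (by omega) h4.symm
          · by_cases hiev : Even i
            · have hEi := (hedge i hij).1 hiev
              by_cases heq : s(x i, x (i+1)) = s(x j, x (j+1))
              · rw [Sym2.eq_iff] at heq
                rcases heq with ⟨h1, h2⟩ | ⟨h1, h2⟩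
                · exact hxne_lt i j (by omega) (le_refl j) (by omega) h1
                · have hne2 : i + 1 ≠ j := by
                    have := Nat.even_iff.1 hev
                    have := Nat.even_iff.1 hiev
                    omega
                  exact hxne_lt (i+1) j (by omega) (le_refl j) hne2 h2
              · exact hM.1.2 _ hEi.1 _ hEj.1 heq (x i) (by simp [Sym2.mem_iff])
                  (by rw [hcon]; simp [Sym2.mem_iff])
            · have hiodd : i % 2 = 1 := by
                rcases Nat.even_or_odd i with h' | h'
                · exact absurd h' hiev
                · exact Nat.odd_iff.1 h'
              have hEi := (hedge (i-1) (by omega)).1 (Nat.even_iff.2 (by omega))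
              rw [show i - 1 + 1 = i by omega] at hEi
              by_cases heq : s(x (i-1), x i) = s(x j, x (j+1))
              · rw [Sym2.eq_iff] at heq
                rcases heq with ⟨h1, h2⟩ | ⟨h1, h2⟩
                · exact hxne_lt (i-1) j (by omega) (le_refl j) (by omega) h1
                · exact hxne_lt i j (by omega) (le_refl j) (by omega) h2
              · exact hM.1.2 _ hEi.1 _ hEj.1 heq (x i) (by simp [Sym2.mem_iff])
                  (by rw [hcon]; simp [Sym2.mem_iff])
        · have hEj := hedgej.2 hev
          rcases Nat.eq_zero_or_pos i with rfl | hipos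
          · apply hNz _ hEj.1
            rw [← hx0, hcon]
            simp [Sym2.mem_iff]
          · have hjodd : j % 2 = 1 := by
              rcases Nat.even_or_odd j with h' | h'
              · exact absurd h' hev
              · exact Nat.odd_iff.1 h'
            by_cases hiev : Even i
            · have hEi := (hedge (i-1) (by omega)).2 (by
                intro hc
                have := Nat.even_iff.1 hc
                have := Nat.even_iff.1 hiev
                omega)
              rw [show i - 1 + 1 = i by omega] at hEi
              by_cases heq : s(x (i-1), x i) = s(x j, x (j+1))
              · rw [Sym2.eq_iff] at heq
                rcases heq with ⟨h1, h2⟩ | ⟨h1, h2⟩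
                · exact hxne_lt (i-1) j (by omega) (le_refl j) (by omega) h1
                · exact hxne_lt i j (by omega) (le_refl j) (by omega) h2
              · exact hN.1.2 _ hEi.1 _ hEj.1 heq (x i) (by simp [Sym2.mem_iff])
                  (by rw [hcon]; simp [Sym2.mem_iff])
            · have hiodd : i % 2 = 1 := by
                rcases Nat.even_or_odd i with h' | h'
                · exact absurd h' hiev
                · exact Nat.odd_iff.1 h'
              have hEi := (hedge i hij).2 hiev
              by_cases heq : s(x i, x (i+1)) = s(x j, x (j+1))
              · rw [Sym2.eq_iff] at heq
                rcases heq with ⟨h1, h2⟩ | ⟨h1, h2⟩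
                · exact hxne_lt i j (by omega) (le_refl j) (by omega) h1
                · have hne2 : i + 1 ≠ j := by omega
                  exact hxne_lt (i+1) j (by omega) (le_refl j) hne2 h2
              · exact hN.1.2 _ hEi.1 _ hEj.1 heq (x i) (by simp [Sym2.mem_iff])
                  (by rw [hcon]; simp [Sym2.mem_iff])
      refine ⟨?_, ?_⟩
      · intro i2 h2 i1 h1
        rcases Nat.eq_or_lt_of_le h2 with rfl | h
        · exact fun hc => hnew i1 (by omega) hc
        · exact hdist i2 (by omega) i1 h1
      · intro i hi
        rcases Nat.eq_or_lt_of_le (Nat.lt_succ_iff.1 hi) with rfl | h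
        · exact hedgej
        · exact hedge i h
  -- a stall must occur
  have hstall : ∃ i, x (i + 1) = x i := by
    by_contra hno
    push_neg at hno
    obtain ⟨hdist, -⟩ := key (A.card + 1) (fun i _ => hno i)
    have hinj : Set.InjOn x ((Finset.range (A.card + 2)) : Finset ℕ) := by
      intro i1 h1 i2 h2 heq
      rw [Finset.coe_range, Set.mem_Iio] at h1 h2
      by_contra hne
      rcases Nat.lt_or_ge i1 i2 with h | h
      · exact hdist i2 (by omega) i1 h heq
      · exact hdist i1 (by omega) i2 (by omega) heq.symm
    have hsub : (Finset.range (A.card + 2)).image x ⊆ A := by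
      intro v hv
      rw [Finset.mem_image] at hv
      obtain ⟨i, -, rfl⟩ := hv
      exact hxA i
    have hcard := Finset.card_le_card hsub
    rw [Finset.card_image_of_injOn hinj, Finset.card_range] at hcard
    omega
  obtain ⟨T, hTstall, hTmin⟩ : ∃ T, x (T + 1) = x T ∧ ∀ i, i < T → x (i + 1) ≠ x i :=
    ⟨Nat.find hstall, Nat.find_spec hstall, fun i hi => Nat.find_min hstall hi⟩
  obtain ⟨hdist, hedge⟩ := key T hTmin
  have hxne : ∀ i1 i2, i1 ≤ T → i2 ≤ T → i1 ≠ i2 → x i1 ≠ x i2 := by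
    intro i1 i2 h1 h2 hne
    rcases Nat.lt_or_ge i1 i2 with h | h
    · exact fun hc => hdist i2 h2 i1 h hc
    · exact fun hc => hdist i1 h1 i2 (by omega) hc.symm
  have hT1 : 1 ≤ T := by
    rcases Nat.eq_zero_or_pos T with rfl | h
    · exfalso
      have h1 : x 1 = mate M (x 0) := by
        have h := hxs 0
        rw [if_pos Even.zero] at h
        exact h
      apply mate_ne G hM.1 he0 hze0
      rw [← hx0, ← h1]
      exact hTstall
    · exact h
  -- the path edge sets
  set MP := ((Finset.range T).filter (fun i => Even i)).image (fun i => s(x i, x (i+1))) with hMP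
  set NP := ((Finset.range T).filter (fun i => ¬ Even i)).image (fun i => s(x i, x (i+1))) with hNP
  have hMPmem : ∀ e, e ∈ MP ↔ ∃ i, i < T ∧ Even i ∧ e = s(x i, x (i+1)) := by
    intro e
    rw [hMP]
    constructor
    · intro h
      rw [Finset.mem_image] at h
      obtain ⟨i, hi, hie⟩ := h
      rw [Finset.mem_filter, Finset.mem_range] at hi
      exact ⟨i, hi.1, hi.2, hie.symm⟩
    · rintro ⟨i, hiT, hiev, rfl⟩
      rw [Finset.mem_image]
      exact ⟨i, Finset.mem_filter.2 ⟨Finset.mem_range.2 hiT, hiev⟩, rfl⟩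
  have hNPmem : ∀ e, e ∈ NP ↔ ∃ i, i < T ∧ ¬ Even i ∧ e = s(x i, x (i+1)) := by
    intro e
    rw [hNP]
    constructor
    · intro h
      rw [Finset.mem_image] at h
      obtain ⟨i, hi, hie⟩ := h
      rw [Finset.mem_filter, Finset.mem_range] at hi
      exact ⟨i, hi.1, hi.2, hie.symm⟩
    · rintro ⟨i, hiT, hiev, rfl⟩
      rw [Finset.mem_image]
      exact ⟨i, Finset.mem_filter.2 ⟨Finset.mem_range.2 hiT, hiev⟩, rfl⟩
  have hMPsub : MP ⊆ M := by
    intro e he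
    obtain ⟨i, hiT, hiev, rfl⟩ := (hMPmem e).1 he
    exact ((hedge i hiT).1 hiev).1
  have hMPnotN : ∀ e ∈ MP, e ∉ N := by
    intro e he
    obtain ⟨i, hiT, hiev, rfl⟩ := (hMPmem e).1 he
    exact ((hedge i hiT).1 hiev).2
  have hNPsub : NP ⊆ N := by
    intro e he
    obtain ⟨i, hiT, hiev, rfl⟩ := (hNPmem e).1 he
    exact ((hedge i hiT).2 hiev).1
  have hNPnotM : ∀ e ∈ NP, e ∉ M := by
    intro e he
    obtain ⟨i, hiT, hiev, rfl⟩ := (hNPmem e).1 he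
    exact ((hedge i hiT).2 hiev).2
  -- cardinalities
  have hedge_inj : ∀ i1 i2, i1 < T → i2 < T → s(x i1, x (i1+1)) = s(x i2, x (i2+1)) → i1 = i2 := by
    intro i1 i2 h1 h2 heq
    by_contra hne
    rw [Sym2.eq_iff] at heq
    rcases heq with ⟨ha, hb⟩ | ⟨ha, hb⟩
    · exact hxne i1 i2 (by omega) (by omega) hne ha
    · rcases Nat.lt_or_ge i1 i2 with h | h
      · exact hxne i1 (i2+1) (by omega) (by omega) (by omega) ha
      · exact hxne (i1+1) i2 (by omega) (by omega) (by omega) hb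
  have hMPcard : MP.card = ((Finset.range T).filter (fun i => Even i)).card := by
    rw [hMP]
    apply Finset.card_image_of_injOn
    intro i1 h1 i2 h2 heq
    rw [Finset.coe_filter, Set.mem_setOf_eq, Finset.mem_range] at h1 h2
    exact hedge_inj i1 i2 h1.1 h2.1 heq
  have hNPcard : NP.card = ((Finset.range T).filter (fun i => ¬ Even i)).card := by
    rw [hNP]
    apply Finset.card_image_of_injOn
    intro i1 h1 i2 h2 heq
    rw [Finset.coe_filter, Set.mem_setOf_eq, Finset.mem_range] at h1 h2
    exact hedge_inj i1 i2 h1.1 h2.1 heq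
  have hcount : ∀ n : ℕ, ((Finset.range n).filter (fun i => Even i)).card = (n+1)/2 ∧
      ((Finset.range n).filter (fun i => ¬ Even i)).card = n/2 := by
    intro n
    induction n with
    | zero => simp
    | succ n IH =>
      rw [Finset.range_add_one, Finset.filter_insert, Finset.filter_insert]
      by_cases h : Even n
      · rw [if_pos h, if_neg (by simpa using h)]
        rw [Finset.card_insert_of_notMem (by simp)]
        have h2 := Nat.even_iff.1 h
        omega
      · rw [if_neg h, if_pos h]
        rw [Finset.card_insert_of_notMem (by simp)]
        have h2 : n % 2 = 1 := by
          rcases Nat.even_or_odd n with h' | h'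
          · exact absurd h' h
          · exact Nat.odd_iff.1 h'
        omega
  -- absorption of incident matching edges into the path
  have habsorbM : ∀ e ∈ M, ∀ i, i ≤ T → x i ∈ e → e ∈ MP := by
    intro e he i hiT hxe
    by_cases hiev : Even i
    · by_cases hiT' : i < T
      · have hEi := (hedge i hiT').1 hiev
        have heq : e = s(x i, x (i+1)) := by
          by_contra hne
          exact hM.1.2 e he _ hEi.1 hne (x i) hxe (by simp [Sym2.mem_iff])
        rw [heq]
        exact (hMPmem _).2 ⟨i, hiT', hiev, rfl⟩
      · exfalso
        have hiT'' : i = T := by omega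
        subst hiT''
        have h1 : x (i+1) = mate M (x i) := by rw [hxs i, if_pos hiev]
        apply mate_ne G hM.1 he hxe
        rw [← h1]
        exact hTstall
    · have hiodd : i % 2 = 1 := by
        rcases Nat.even_or_odd i with h' | h'
        · exact absurd h' hiev
        · exact Nat.odd_iff.1 h'
      have hEi := (hedge (i-1) (by omega)).1 (Nat.even_iff.2 (by omega))
      rw [show i - 1 + 1 = i by omega] at hEi
      have heq : e = s(x (i-1), x i) := by
        by_contra hne
        exact hM.1.2 e he _ hEi.1 hne (x i) hxe (by simp [Sym2.mem_iff])
      rw [heq]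
      refine (hMPmem _).2 ⟨i-1, by omega, Nat.even_iff.2 (by omega), ?_⟩
      rw [show i - 1 + 1 = i by omega]
  have habsorbN : ∀ e ∈ N, ∀ i, i ≤ T → x i ∈ e → e ∈ NP := by
    intro e he i hiT hxe
    rcases Nat.eq_zero_or_pos i with rfl | hipos
    · rw [hx0] at hxe
      exact absurd hxe (hNz e he)
    by_cases hiev : Even i
    · have hieven : i % 2 = 0 := Nat.even_iff.1 hiev
      have hEi := (hedge (i-1) (by omega)).2 (by
        intro hc
        have := Nat.even_iff.1 hc
        omega)
      rw [show i - 1 + 1 = i by omega] at hEi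
      have heq : e = s(x (i-1), x i) := by
        by_contra hne
        exact hN.1.2 e he _ hEi.1 hne (x i) hxe (by simp [Sym2.mem_iff])
      rw [heq]
      refine (hNPmem _).2 ⟨i-1, by omega, by
        intro hc
        have := Nat.even_iff.1 hc
        omega, ?_⟩
      rw [show i - 1 + 1 = i by omega]
    · by_cases hiT' : i < T
      · have hEi := (hedge i hiT').2 hiev
        have heq : e = s(x i, x (i+1)) := by
          by_contra hne
          exact hN.1.2 e he _ hEi.1 hne (x i) hxe (by simp [Sym2.mem_iff])
        rw [heq]
        exact (hNPmem _).2 ⟨i, hiT', hiev, rfl⟩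
      · exfalso
        have hiT'' : i = T := by omega
        subst hiT''
        have h1 : x (i+1) = mate N (x i) := by rw [hxs i, if_neg hiev]
        apply mate_ne G hN.1 he hxe
        rw [← h1]
        exact hTstall
  rcases Nat.even_or_odd T with hTev | hTodd
  · -- T even : toggle M along the path, z becomes exposed
    have hTe2 := Nat.even_iff.1 hTev
    set M' := (M \ MP) ∪ NP with hM'
    have hM'mat : MOn G A M' := by
      refine ⟨⟨?_, ?_⟩, ?_⟩
      · intro e he
        rw [hM', Finset.mem_union, Finset.mem_sdiff] at he
        rcases he with ⟨heM, -⟩ | heNP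
        · exact hM.1.1 e heM
        · exact hNA.1.1 e (hNPsub heNP)
      · intro e he f hf hne v hv hvf
        rw [hM', Finset.mem_union, Finset.mem_sdiff] at he hf
        rcases he with ⟨heM, heMP⟩ | heNP
        · rcases hf with ⟨hfM, hfMP⟩ | hfNP
          · exact hM.1.2 e heM f hfM hne v hv hvf
          · obtain ⟨i, hiT, hiev, rfl⟩ := (hNPmem f).1 hfNP
            rw [Sym2.mem_iff] at hvf
            rcases hvf with rfl | rfl
            · exact heMP (habsorbM e heM i (by omega) hv)
            · exact heMP (habsorbM e heM (i+1) (by omega) hv)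
        · rcases hf with ⟨hfM, hfMP⟩ | hfNP
          · obtain ⟨i, hiT, hiev, rfl⟩ := (hNPmem e).1 heNP
            rw [Sym2.mem_iff] at hv
            rcases hv with rfl | rfl
            · exact hfMP (habsorbM f hfM i (by omega) hvf)
            · exact hfMP (habsorbM f hfM (i+1) (by omega) hvf)
          · obtain ⟨i, hiT, hiev, rfl⟩ := (hNPmem e).1 heNP
            obtain ⟨jj, hjT, hjev, hfeq⟩ := (hNPmem f).1 hfNP
            have hiodd : i % 2 = 1 := by
              rcases Nat.even_or_odd i with h' | h'
              · exact absurd h' hiev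
              · exact Nat.odd_iff.1 h'
            have hjodd : jj % 2 = 1 := by
              rcases Nat.even_or_odd jj with h' | h'
              · exact absurd h' hjev
              · exact Nat.odd_iff.1 h'
            have hij : i ≠ jj := by
              intro h
              exact hne (by rw [hfeq, h])
            rw [hfeq] at hvf
            rw [Sym2.mem_iff] at hv hvf
            rcases hv with rfl | rfl <;> rcases hvf with h | h
            · exact hxne i jj (by omega) (by omega) hij h
            · exact hxne i (jj+1) (by omega) (by omega) (by omega) h
            · exact hxne (i+1) jj (by omega) (by omega) (by omega) h
            · exact hxne (i+1) (jj+1) (by omega) (by omega) (by omega) h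
      · intro e he
        rw [hM', Finset.mem_union, Finset.mem_sdiff] at he
        rcases he with ⟨heM, -⟩ | heNP
        · exact hM.2 heM
        · exact onE_subset G (Finset.erase_subset _ _) (hN.2 (hNPsub heNP))
    have hM'card : M'.card = nuOn G A := by
      have hdis : Disjoint (M \ MP) NP := by
        rw [Finset.disjoint_right]
        intro e heNP heMS
        rw [Finset.mem_sdiff] at heMS
        exact hNPnotM e heNP heMS.1
      have hMPle : MP.card ≤ M.card := Finset.card_le_card hMPsub
      rw [hM', Finset.card_union_of_disjoint hdis, Finset.card_sdiff_of_subset hMPsub]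
      rw [hMPcard, hNPcard] at *
      have hc1 := (hcount T).1
      have hc2 := (hcount T).2
      omega
    have hM'z : ∀ e ∈ M', z ∉ e := by
      intro e he hz
      rw [hM', Finset.mem_union, Finset.mem_sdiff] at he
      rcases he with ⟨heM, heMP⟩ | heNP
      · exact heMP (habsorbM e heM 0 (by omega) (by rw [hx0]; exact hz))
      · exact hNz e (hNPsub heNP) hz
    have hcov : ∀ i, i < T → ∃ e ∈ M, x i ∈ e := by
      intro i hiT
      by_cases hiev : Even i
      · exact ⟨s(x i, x (i+1)), ((hedge i hiT).1 hiev).1, by simp [Sym2.mem_iff]⟩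
      · have hiodd : i % 2 = 1 := by
          rcases Nat.even_or_odd i with h' | h'
          · exact absurd h' hiev
          · exact Nat.odd_iff.1 h'
        have hEi := (hedge (i-1) (by omega)).1 (Nat.even_iff.2 (by omega))
        rw [show i - 1 + 1 = i by omega] at hEi
        exact ⟨_, hEi.1, by simp [Sym2.mem_iff]⟩
    have hnotpath : ∀ v', (∀ e ∈ M, v' ∉ e) → ∀ i, i < T → v' ≠ x i := by
      intro v' hvM i hiT hcon
      obtain ⟨e, he, hxe⟩ := hcov i hiT
      exact hvM e he (by rw [hcon]; exact hxe)
    have hexp' : ∀ v', (∀ e ∈ M, v' ∉ e) → v' ≠ x T → ∀ e ∈ M', v' ∉ e := by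
      intro v' hvM hvT e he hv
      rw [hM', Finset.mem_union, Finset.mem_sdiff] at he
      rcases he with ⟨heM, -⟩ | heNP
      · exact hvM e heM hv
      · obtain ⟨i, hiT, hiev, rfl⟩ := (hNPmem e).1 heNP
        rw [Sym2.mem_iff] at hv
        rcases hv with h | h
        · exact hnotpath v' hvM i hiT h
        · rcases Nat.lt_or_ge (i+1) T with h2 | h2
          · exact hnotpath v' hvM (i+1) h2 h
          · have h3 : i + 1 = T := by omega
            rw [h3] at h
            exact hvT h
    by_cases hxTu : u = x T
    · have hwT : w ≠ x T := fun h => huw (h.symm ▸ hxTu)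
      exact hmin t1 (by omega) ⟨M', z, w, ⟨hM'mat, hM'card⟩, hzA, hwA, hzw,
        hM'z, hexp' w hwe hwT, hrest⟩
    · exact hmin 1 (by omega) ⟨M', u, z, ⟨hM'mat, hM'card⟩, huA, hzA, huz,
        hexp' u hue hxTu, hM'z, z, hzA, hadj_uz, rfl⟩
  · -- T odd : toggle N along the path, getting a bigger matching
    have hTo2 := Nat.odd_iff.1 hTodd
    set N' := (N \ NP) ∪ MP with hN'
    have hN'mat : MOn G A N' := by
      refine ⟨⟨?_, ?_⟩, ?_⟩
      · intro e he
        rw [hN', Finset.mem_union, Finset.mem_sdiff] at he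
        rcases he with ⟨heN, -⟩ | heMP
        · exact hNA.1.1 e heN
        · exact hM.1.1 e (hMPsub heMP)
      · intro e he f hf hne v hv hvf
        rw [hN', Finset.mem_union, Finset.mem_sdiff] at he hf
        rcases he with ⟨heN, heNP⟩ | heMP
        · rcases hf with ⟨hfN, hfNP⟩ | hfMP
          · exact hN.1.2 e heN f hfN hne v hv hvf
          · obtain ⟨i, hiT, hiev, rfl⟩ := (hMPmem f).1 hfMP
            rw [Sym2.mem_iff] at hvf
            rcases hvf with rfl | rfl
            · exact heNP (habsorbN e heN i (by omega) hv)
            · exact heNP (habsorbN e heN (i+1) (by omega) hv)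
        · rcases hf with ⟨hfN, hfNP⟩ | hfMP
          · obtain ⟨i, hiT, hiev, rfl⟩ := (hMPmem e).1 heMP
            rw [Sym2.mem_iff] at hv
            rcases hv with rfl | rfl
            · exact hfNP (habsorbN f hfN i (by omega) hvf)
            · exact hfNP (habsorbN f hfN (i+1) (by omega) hvf)
          · obtain ⟨i, hiT, hiev, rfl⟩ := (hMPmem e).1 heMP
            obtain ⟨jj, hjT, hjev, hfeq⟩ := (hMPmem f).1 hfMP
            have hieven : i % 2 = 0 := Nat.even_iff.1 hiev
            have hjeven : jj % 2 = 0 := Nat.even_iff.1 hjev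
            have hij : i ≠ jj := by
              intro h
              exact hne (by rw [hfeq, h])
            rw [hfeq] at hvf
            rw [Sym2.mem_iff] at hv hvf
            rcases hv with rfl | rfl <;> rcases hvf with h | h
            · exact hxne i jj (by omega) (by omega) hij h
            · exact hxne i (jj+1) (by omega) (by omega) (by omega) h
            · exact hxne (i+1) jj (by omega) (by omega) (by omega) h
            · exact hxne (i+1) (jj+1) (by omega) (by omega) (by omega) h
      · intro e he
        rw [hN', Finset.mem_union, Finset.mem_sdiff] at he
        rcases he with ⟨heN, -⟩ | heMP
        · exact onE_subset G (Finset.erase_subset _ _) (hN.2 heN)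
        · exact hM.2 (hMPsub heMP)
    have hN'card : N'.card = nuOn G A + 1 := by
      have hdis : Disjoint (N \ NP) MP := by
        rw [Finset.disjoint_right]
        intro e heMP heNS
        rw [Finset.mem_sdiff] at heNS
        exact hMPnotN e heMP heNS.1
      have hNPle : NP.card ≤ N.card := Finset.card_le_card hNPsub
      rw [hN', Finset.card_union_of_disjoint hdis, Finset.card_sdiff_of_subset hNPsub]
      rw [hMPcard, hNPcard] at *
      have hc1 := (hcount T).1
      have hc2 := (hcount T).2
      omega
    have := MOn.card_le G hN'mat
    omega

end Gallai

section StarBound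

/-- closed neighbourhood inside `A` -/
def NcOn (A : Finset V) (v : V) : Finset V := A.filter (fun w => w = v ∨ G.Adj v w)

/-- the equality structure : every non-isolated vertex lies in a clique `K_{D+1}`
that is a union of closed neighbourhoods -/
def Good (D : ℕ) (A : Finset V) : Prop :=
  ∀ v ∈ A, degOn G A v = 0 ∨
    ((NcOn G A v).card = D + 1 ∧ ∀ x ∈ NcOn G A v, ∀ y ∈ NcOn G A v, x ≠ y → G.Adj x y)

lemma card_sym2_nondiag (A : Finset V) :
    (A.sym2.filter (fun e => ¬ e.IsDiag)).card = A.card.choose 2 := by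
  classical
  have hdiag : A.sym2.filter (fun e => e.IsDiag) = A.image Sym2.diag := by
    ext e
    induction e with
    | _ x y =>
      simp only [Finset.mem_filter, Finset.mk_mem_sym2_iff, Finset.mem_image]
      constructor
      · rintro ⟨⟨hx, hy⟩, hd⟩
        rw [Sym2.mk_isDiag_iff] at hd
        exact ⟨x, hx, by rw [hd]; rfl⟩
      · rintro ⟨a, ha, heq⟩
        have h1' : x = a ∧ y = a := by
          have := heq.symm
          rw [Sym2.diag, Sym2.eq_iff] at this
          tauto
        obtain ⟨rfl, rfl⟩ := h1'
        exact ⟨⟨ha, ha⟩, Sym2.mk_isDiag_iff.2 rfl⟩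
  have hcards := Finset.card_filter_add_card_filter_not
    (s := A.sym2) (p := fun e => e.IsDiag)
  rw [hdiag, Finset.card_image_of_injective _ Sym2.diag_injective] at hcards
  have hs2 : A.sym2.card = (A.card + 1).choose 2 := Finset.card_sym2 A
  have hch : (A.card + 1).choose 2 = A.card.choose 2 + A.card := by
    rw [Nat.choose_succ_succ]
    simp [Nat.choose_one_right, Nat.add_comm]
  omega

lemma onE_subset_nondiag (A : Finset V) :
    onE G A ⊆ A.sym2.filter (fun e => ¬ e.IsDiag) := by
  intro e hemem
  rw [mem_onE] at hemem
  obtain ⟨a, b, hab, hadj, rfl⟩ := edge_ends G hemem.1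
  rw [Finset.mem_filter, Finset.mk_mem_sym2_iff]
  refine ⟨⟨hemem.2 a (by simp [Sym2.mem_iff]), hemem.2 b (by simp [Sym2.mem_iff])⟩, ?_⟩
  simp [Sym2.isDiag_iff_proj_eq, hab]

theorem star_bound (D : ℕ) (hdeg : ∀ v : V, G.degree v ≤ D) :
    ∀ A : Finset V, (onE G A).card ≤ nuOn G A * (D + 1) ∧
      ((onE G A).card = nuOn G A * (D + 1) → Good G D A) := by
  intro A
  induction A using Finset.strongInduction with
  | H A IH =>
  by_cases h0 : (onE G A).card = 0
  · refine ⟨by omega, fun _ v hv => ?_⟩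
    left
    exact degOn_zero_of_onE_empty G (Finset.card_eq_zero.1 h0) hv
  by_cases hess : ∃ v ∈ A, nuOn G (A.erase v) + 1 ≤ nuOn G A
  · -- an essential vertex : strict inequality
    obtain ⟨v, hvA, hvess⟩ := hess
    have hIH := IH (A.erase v) (Finset.erase_ssubset hvA)
    have hstep := onE_card_le_erase G A v
    have hdegv : degOn G A v ≤ D := le_trans (degOn_le_degree G A v) (hdeg v)
    have hlt : (onE G A).card < nuOn G A * (D + 1) := by
      have h1' : (onE G (A.erase v)).card ≤ nuOn G (A.erase v) * (D + 1) := hIH.1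
      have h2' : (nuOn G (A.erase v) + 1) * (D + 1) ≤ nuOn G A * (D + 1) :=
        Nat.mul_le_mul_right _ hvess
      have h3' : (nuOn G (A.erase v) + 1) * (D + 1) = nuOn G (A.erase v) * (D + 1) + (D + 1) := by
        ring
      omega
    exact ⟨le_of_lt hlt, fun h => absurd h (by omega)⟩
  push_neg at hess
  have hness : ∀ v ∈ A, nuOn G A ≤ nuOn G (A.erase v) := by
    intro v hv
    have := hess v hv
    omega
  by_cases hsplit : ∃ B ⊆ A, B.Nonempty ∧ B ≠ A ∧ ∀ x ∈ B, ∀ y ∈ A \ B, ¬ G.Adj x y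
  · -- disconnected : split into two pieces
    obtain ⟨B, hBA, hBne, hBneq, hnc⟩ := hsplit
    have hBss : B ⊂ A := hBA.ssubset_of_ne hBneq
    have hCss : A \ B ⊂ A := Finset.sdiff_ssubset hBA hBne
    have hIHB := IH B hBss
    have hIHC := IH (A \ B) hCss
    have hν := nuOn_split G hBA hnc
    have hE : (onE G A).card = (onE G B).card + (onE G (A \ B)).card := by
      have hcover : onE G A = onE G B ∪ onE G (A \ B) := by
        apply Finset.Subset.antisymm
        · intro e hemem
          have hm := hemem
          rw [mem_onE] at hm
          obtain ⟨a, b, hab, hadj, rfl⟩ := edge_ends G hm.1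
          have ha : a ∈ A := hm.2 a (by simp [Sym2.mem_iff])
          have hb : b ∈ A := hm.2 b (by simp [Sym2.mem_iff])
          rw [Finset.mem_union, mem_onE, mem_onE]
          by_cases haB : a ∈ B <;> by_cases hbB : b ∈ B
          · left
            refine ⟨hm.1, ?_⟩
            intro x hx
            rw [Sym2.mem_iff] at hx
            rcases hx with rfl | rfl <;> assumption
          · exact absurd hadj (hnc a haB b (Finset.mem_sdiff.2 ⟨hb, hbB⟩))
          · exact absurd hadj.symm (hnc b hbB a (Finset.mem_sdiff.2 ⟨ha, haB⟩))
          · right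
            refine ⟨hm.1, ?_⟩
            intro x hx
            rw [Sym2.mem_iff] at hx
            rcases hx with rfl | rfl <;> exact Finset.mem_sdiff.2 ⟨by assumption, by assumption⟩
        · exact Finset.union_subset (onE_subset G hBA) (onE_subset G Finset.sdiff_subset)
      have hdisE : Disjoint (onE G B) (onE G (A \ B)) := by
        rw [Finset.disjoint_left]
        intro e heB heC
        rw [mem_onE] at heB heC
        obtain ⟨a, b, hab, hadj, heq⟩ := edge_ends G heB.1
        have h1' := heB.2 a (by rw [heq]; simp [Sym2.mem_iff])
        have h2' := heC.2 a (by rw [heq]; simp [Sym2.mem_iff])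
        exact (Finset.mem_sdiff.1 h2').2 h1'
      rw [hcover, Finset.card_union_of_disjoint hdisE]
    constructor
    · rw [hE, hν, Nat.add_mul]
      exact Nat.add_le_add hIHB.1 hIHC.1
    · intro heq
      have hEeq : (onE G B).card = nuOn G B * (D + 1) ∧
          (onE G (A \ B)).card = nuOn G (A \ B) * (D + 1) := by
        have h1' := hIHB.1
        have h2' := hIHC.1
        rw [hE, hν, Nat.add_mul] at heq
        omega
      have hGB := hIHB.2 hEeq.1
      have hGC := hIHC.2 hEeq.2
      intro v hv
      by_cases hvB : v ∈ B
      · have hfil : A.filter (fun w => G.Adj v w) = B.filter (fun w => G.Adj v w) := by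
          ext w
          simp only [Finset.mem_filter]
          constructor
          · rintro ⟨hwA, hadj⟩
            refine ⟨?_, hadj⟩
            by_contra hwB
            exact hnc v hvB w (Finset.mem_sdiff.2 ⟨hwA, hwB⟩) hadj
          · rintro ⟨hwB, hadj⟩
            exact ⟨hBA hwB, hadj⟩
        have hnc2 : NcOn G A v = NcOn G B v := by
          ext w
          simp only [NcOn, Finset.mem_filter]
          constructor
          · rintro ⟨hwA, h | hadj⟩
            · exact ⟨h ▸ hvB, Or.inl h⟩
            · refine ⟨?_, Or.inr hadj⟩
              by_contra hwB
              exact hnc v hvB w (Finset.mem_sdiff.2 ⟨hwA, hwB⟩) hadj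
          · rintro ⟨hwB, hor⟩
            exact ⟨hBA hwB, hor⟩
        rcases hGB v hvB with h | ⟨hc, hcl⟩
        · left
          rw [degOn, hfil]
          exact h
        · right
          rw [hnc2]
          refine ⟨hc, ?_⟩
          exact hcl
      · have hvC : v ∈ A \ B := Finset.mem_sdiff.2 ⟨hv, hvB⟩
        have hfil : A.filter (fun w => G.Adj v w) = (A \ B).filter (fun w => G.Adj v w) := by
          ext w
          simp only [Finset.mem_filter]
          constructor
          · rintro ⟨hwA, hadj⟩
            refine ⟨?_, hadj⟩
            rw [Finset.mem_sdiff]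
            refine ⟨hwA, ?_⟩
            intro hwB
            exact hnc w hwB v hvC hadj.symm
          · rintro ⟨hwC, hadj⟩
            exact ⟨(Finset.mem_sdiff.1 hwC).1, hadj⟩
        have hnc2 : NcOn G A v = NcOn G (A \ B) v := by
          ext w
          simp only [NcOn, Finset.mem_filter]
          constructor
          · rintro ⟨hwA, h | hadj⟩
            · exact ⟨h ▸ hvC, Or.inl h⟩
            · refine ⟨?_, Or.inr hadj⟩
              rw [Finset.mem_sdiff]
              refine ⟨hwA, ?_⟩
              intro hwB
              exact hnc w hwB v hvC hadj.symm
          · rintro ⟨hwC, hor⟩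
            exact ⟨(Finset.mem_sdiff.1 hwC).1, hor⟩
        rcases hGC v hvC with h | ⟨hc, hcl⟩
        · left
          rw [degOn, hfil]
          exact h
        · right
          rw [hnc2]
          exact ⟨hc, hcl⟩
  · -- connected case
    push_neg at hsplit
    have hconn : ∀ B ⊆ A, B.Nonempty → B ≠ A → ∃ x ∈ B, ∃ y ∈ A \ B, G.Adj x y := by
      intro B hBA hBne hBneq
      have := hsplit B hBA hBne hBneq
      exact this
    have hgal := gallai G A hconn hness
    obtain ⟨M, hMon, hMc⟩ := exists_max_matching G A
    have h2ν : 2 * nuOn G A ≤ A.card := by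
      have := two_mul_card_le G hMon
      omega
    obtain ⟨f, hfE⟩ := Finset.card_pos.1 (by omega : 0 < (onE G A).card)
    have hν1 : 1 ≤ nuOn G A := nuOn_pos G hfE
    have hdegsum : 2 * (onE G A).card ≤ A.card * D := by
      rw [← sum_degOn_eq G A]
      exact Finset.sum_le_card_nsmul _ _ D
        (fun v _ => le_trans (degOn_le_degree G A v) (hdeg v))
    have hchoose : (onE G A).card ≤ A.card.choose 2 := card_onE_le_choose G A
    have hch2 : 2 * A.card.choose 2 = A.card * (A.card - 1) := by
      have hev : Even (A.card * (A.card - 1)) := by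
        rcases Nat.even_or_odd A.card with h | h
        · exact h.mul_right _
        · have h1' : Even (A.card - 1) := Nat.Odd.sub_odd h odd_one
          exact h1'.mul_left _
      obtain ⟨t, ht⟩ := hev
      rw [Nat.choose_two_right]
      omega
    have hn2 : 2 ≤ A.card := by omega
    have hparity : 2 * nuOn G A = A.card ∨ 2 * nuOn G A = A.card - 1 := by omega
    by_cases hnD : A.card ≤ D + 1
    · rcases hparity with hp | hp
      · -- n even : strict
        have h2' : A.card * (A.card - 1) < A.card * (D + 1) :=
          mul_lt_mul_of_pos_left (by omega) (by omega)
        have h3' : A.card * (D + 1) = 2 * (nuOn G A * (D + 1)) := by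
          rw [← hp]; ring
        have hstrict : (onE G A).card < nuOn G A * (D + 1) := by omega
        exact ⟨le_of_lt hstrict, fun h => absurd h (by omega)⟩
      · -- n odd
        have h2' : A.card * (A.card - 1) = 2 * nuOn G A * A.card := by
          rw [mul_comm, hp]
        have h3' : 2 * nuOn G A * A.card ≤ 2 * nuOn G A * (D + 1) :=
          Nat.mul_le_mul_left _ hnD
        have h4' : 2 * nuOn G A * (D + 1) = 2 * (nuOn G A * (D + 1)) := by ring
        have hle : (onE G A).card ≤ nuOn G A * (D + 1) := by omega
        refine ⟨hle, fun heq => ?_⟩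
        have hneq : A.card = D + 1 := by
          by_contra hne
          have h5' : 2 * nuOn G A * A.card < 2 * nuOn G A * (D + 1) :=
            mul_lt_mul_of_pos_left (by omega) (by omega)
          omega
        have hecomplete : (onE G A).card = A.card.choose 2 := by omega
        have hsets : onE G A = A.sym2.filter (fun e => ¬ e.IsDiag) := by
          apply Finset.eq_of_subset_of_card_le (onE_subset_nondiag G A)
          rw [card_sym2_nondiag]
          omega
        have hadjall : ∀ x ∈ A, ∀ y ∈ A, x ≠ y → G.Adj x y := by
          intro x hx y hy hxy
          have hmem : s(x, y) ∈ A.sym2.filter (fun e => ¬ e.IsDiag) := by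
            rw [Finset.mem_filter, Finset.mk_mem_sym2_iff]
            exact ⟨⟨hx, hy⟩, by simp [Sym2.mk_isDiag_iff, hxy]⟩
          rw [← hsets, mem_onE] at hmem
          have := hmem.1
          rwa [SimpleGraph.mem_edgeSet] at this
        intro v hv
        right
        have hNc : NcOn G A v = A := by
          apply Finset.Subset.antisymm (Finset.filter_subset _ _)
          intro w hw
          simp only [NcOn, Finset.mem_filter]
          by_cases hwv : w = v
          · exact ⟨hw, Or.inl hwv⟩
          · exact ⟨hw, Or.inr (hadjall v hv w hw (fun h => hwv h.symm))⟩
        rw [hNc]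
        constructor
        · omega
        · intro x hx y hy hxy
          exact hadjall x hx y hy hxy
    · -- n ≥ D + 2 : strict
      push_neg at hnD
      have hstrict : (onE G A).card < nuOn G A * (D + 1) := by
        rcases hparity with hp | hp
        · have h2' : A.card * D < A.card * (D + 1) :=
            mul_lt_mul_of_pos_left (by omega) (by omega)
          have h3' : A.card * (D + 1) = 2 * (nuOn G A * (D + 1)) := by rw [← hp]; ring
          omega
        · have hm1 : A.card = (A.card - 1) + 1 := by omega
          have hx : 2 * (nuOn G A * (D + 1)) = (A.card - 1) * (D + 1) := by
            rw [← hp]; ring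
          have hy : (A.card - 1) * (D + 1) = (A.card - 1) * D + (A.card - 1) := by ring
          have hz : A.card * D = (A.card - 1) * D + D := by
            conv_lhs => rw [hm1]
            ring
          have hDm : D < A.card - 1 := by omega
          omega
      exact ⟨le_of_lt hstrict, fun h => absurd h (by omega)⟩

end StarBound


section CaseC

lemma onE_univ : onE G Finset.univ = G.edgeFinset := by
  ext e
  rw [mem_onE, SimpleGraph.mem_edgeFinset]
  simp

lemma degOn_univ (v : V) : degOn G Finset.univ v = G.degree v := by
  rw [degOn, ← G.card_neighborFinset_eq_degree]
  congr 1
  ext w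
  simp [SimpleGraph.mem_neighborFinset]

lemma caseC {k : ℕ} (hk : 2 ≤ k)
    (hiso : ∀ v : V, 0 < G.degree v)
    (h2 : ¬ ContainsCopy (kMatching k) G)
    (he : G.edgeFinset.card = (k - 1) ^ 2)
    (hdeg : ∀ v : V, G.degree v < k - 1) :
    k = 4 ∧ Nonempty (G ≃g threeK3) := by
  classical
  set d := k - 1 with hd
  have hd1 : 1 ≤ d := by omega
  -- there is an edge, hence a vertex, hence d ≥ 2
  have hepos : 0 < G.edgeFinset.card := by
    rw [he]
    positivity
  obtain ⟨f0, hf0⟩ := Finset.card_pos.1 hepos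
  obtain ⟨a0, b0, hab0, hadj0, -⟩ := edge_ends G (SimpleGraph.mem_edgeFinset.1 hf0)
  have hd2 : 2 ≤ d := by
    have h1' := hiso a0
    have h2' := hdeg a0
    omega
  set D := d - 1 with hD
  have hD1 : D + 1 = d := by omega
  have hdegD : ∀ v : V, G.degree v ≤ D := by
    intro v
    have := hdeg v
    omega
  -- matching number at most d
  have hν : nuOn G Finset.univ ≤ d := by
    obtain ⟨M, hM, hMc⟩ := exists_max_matching G Finset.univ
    rw [← hMc]
    have := matching_lt G h2 hM.1
    omega
  have hSB := star_bound G D hdegD Finset.univ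
  have honE : (onE G Finset.univ).card = d ^ 2 := by rw [onE_univ]; exact he
  have hSB1 := hSB.1
  rw [hD1, honE] at hSB1
  -- forcing equality
  have hν2 : nuOn G Finset.univ * d ≤ d * d := Nat.mul_le_mul_right _ hν
  have hdd : d * d = d ^ 2 := (sq d).symm
  have hνd : nuOn G Finset.univ = d := by
    have h1' : d * d ≤ nuOn G Finset.univ * d := by omega
    have := Nat.le_of_mul_le_mul_right h1' (by omega : 0 < d)
    omega
  have hGood : Good G D Finset.univ := by
    apply hSB.2
    rw [honE, hνd, hD1]
    exact hdd.symm
  -- clique structure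
  set C : V → Finset V := fun v => NcOn G Finset.univ v with hC
  have hCself : ∀ v : V, v ∈ C v := by
    intro v
    simp [hC, NcOn]
  have hCmemiff : ∀ v w : V, w ∈ C v ↔ (w = v ∨ G.Adj v w) := by
    intro v w
    simp [hC, NcOn]
  have hCstruct : ∀ v : V, (C v).card = d ∧
      ∀ x ∈ C v, ∀ y ∈ C v, x ≠ y → G.Adj x y := by
    intro v
    rcases hGood v (Finset.mem_univ v) with h | ⟨hc, hcl⟩
    · exfalso
      rw [degOn_univ] at h
      have := hiso v
      omega
    · exact ⟨by rw [← hD1]; exact hc, hcl⟩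
  have hCeq : ∀ v w : V, w ∈ C v → C w = C v := by
    intro v w hw
    have hsub : C v ⊆ C w := by
      intro x hx
      rw [hCmemiff]
      by_cases hxw : x = w
      · exact Or.inl hxw
      · exact Or.inr ((hCstruct v).2 w hw x hx (fun h => hxw h.symm))
    exact (Finset.eq_of_subset_of_card_le hsub
      (by rw [(hCstruct v).1, (hCstruct w).1])).symm
  have hCadj : ∀ v w : V, G.Adj v w → C w = C v := by
    intro v w hadj
    exact hCeq v w ((hCmemiff v w).2 (Or.inr hadj))
  have hNb : ∀ v : V, G.neighborFinset v = (C v).erase v := by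
    intro v
    ext w
    rw [SimpleGraph.mem_neighborFinset, Finset.mem_erase, hCmemiff]
    constructor
    · intro h
      exact ⟨fun hh => G.irrefl (hh ▸ h), Or.inr h⟩
    · rintro ⟨hne, h | h⟩
      · exact absurd h hne
      · exact h
  have hdeg_all : ∀ v : V, G.degree v = d - 1 := by
    intro v
    rw [← G.card_neighborFinset_eq_degree, hNb, Finset.card_erase_of_mem (hCself v),
      (hCstruct v).1]
  -- the cliques
  set R : Finset (Finset V) := Finset.univ.image C with hR
  have hRdisj : ∀ c ∈ R, ∀ c' ∈ R, c ≠ c' → Disjoint c c' := by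
    intro c hc c' hc' hne
    rw [hR, Finset.mem_image] at hc hc'
    obtain ⟨v, -, rfl⟩ := hc
    obtain ⟨w, -, rfl⟩ := hc'
    rw [Finset.disjoint_left]
    intro x hx hx'
    exact hne ((hCeq v x hx).symm.trans (hCeq w x hx'))
  have huniv : Finset.univ = R.biUnion (fun c => c) := by
    apply Finset.Subset.antisymm
    · intro v _
      rw [Finset.mem_biUnion]
      exact ⟨C v, Finset.mem_image_of_mem C (Finset.mem_univ v), hCself v⟩
    · exact Finset.subset_univ _
  have hncard : Fintype.card V = R.card * d := by
    rw [← Finset.card_univ, huniv, Finset.card_biUnion hRdisj]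
    have hcc : ∀ c ∈ R, c.card = d := by
      intro c hc
      rw [hR, Finset.mem_image] at hc
      obtain ⟨v, -, rfl⟩ := hc
      exact (hCstruct v).1
    rw [Finset.sum_congr rfl hcc, Finset.sum_const, smul_eq_mul]
  -- degree sum : n (d-1) = 2 d²
  have hsumdeg : Fintype.card V * (d - 1) = 2 * d ^ 2 := by
    have := G.sum_degrees_eq_twice_card_edges
    rw [he] at this
    rw [← this, Finset.sum_congr rfl (fun v _ => hdeg_all v), Finset.sum_const, smul_eq_mul,
      Finset.card_univ]
  have hcd : R.card * (d - 1) = 2 * d := by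
    have h1' : (R.card * d) * (d - 1) = (2 * d) * d := by
      rw [← hncard, hsumdeg, sq]
      ring
    have h2' : (R.card * d) * (d - 1) = (R.card * (d - 1)) * d := by ring
    rw [h2'] at h1'
    exact Nat.eq_of_mul_eq_mul_right (by omega) h1'
  -- solve : (c-2)(d-1) = 2 with d-1 ≥ 1
  have hc3 : 3 ≤ R.card := by
    by_contra hcle
    push_neg at hcle
    have : R.card * (d - 1) ≤ 2 * (d - 1) := Nat.mul_le_mul_right _ (by omega)
    omega
  have hsolve : (R.card - 2) * (d - 1) = 2 := by
    have := Nat.sub_mul R.card 2 (d - 1)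
    omega
  have hdcase : d = 2 ∨ d = 3 := by
    have hdvd : (d - 1) ∣ 2 := Dvd.intro_left _ hsolve
    have := Nat.le_of_dvd (by norm_num) hdvd
    omega
  -- rule out d = 2
  rcases hdcase with hd2' | hd3
  · exfalso
    -- all degrees are 1, so the edge set is a matching of size 4 > 2
    have hmatch : IsMatchingSet G G.edgeFinset := by
      constructor
      · intro e hee
        exact SimpleGraph.mem_edgeFinset.1 hee
      · intro e hee f hfe hne v hv hvf
        have hsub : {e, f} ⊆ G.edgeFinset.filter (fun e' => v ∈ e') := by
          intro x hx
          rw [Finset.mem_insert, Finset.mem_singleton] at hx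
          rw [Finset.mem_filter]
          rcases hx with rfl | rfl
          · exact ⟨hee, hv⟩
          · exact ⟨hfe, hvf⟩
        have hcard2 : 2 ≤ (G.edgeFinset.filter (fun e' => v ∈ e')).card := by
          calc 2 = ({e, f} : Finset (Sym2 V)).card := by
                rw [Finset.card_insert_of_notMem (by simp [hne]), Finset.card_singleton]
          _ ≤ _ := Finset.card_le_card hsub
        rw [← degree_eq_card_incident] at hcard2
        rw [hdeg_all v] at hcard2
        omega
    have hMon : MOn G Finset.univ G.edgeFinset := by
      refine ⟨hmatch, ?_⟩
      rw [onE_univ]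
    have := MOn.card_le G hMon
    rw [he, hνd] at this
    rw [hd2'] at this
    norm_num at this
  -- now d = 3, k = 4
  have hk4 : k = 4 := by omega
  refine ⟨hk4, ?_⟩
  have hRcard : R.card = 3 := by
    rw [hd3] at hcd
    omega
  have hn9 : Fintype.card V = 9 := by rw [hncard, hRcard, hd3]
  -- index the cliques
  have eR : { c // c ∈ R } ≃ Fin 3 :=
    Fintype.equivFinOfCardEq (by rw [Fintype.card_coe]; exact hRcard)
  have hCR : ∀ v : V, C v ∈ R := fun v => Finset.mem_image_of_mem C (Finset.mem_univ v)
  set ridx : V → Fin 3 := fun v => eR ⟨C v, hCR v⟩ with hridx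
  set gidx : V → Fin 3 := fun v =>
    if h : (C v).card = 3 then (C v).equivFinOfCardEq h ⟨v, hCself v⟩ else 0 with hgidx
  have hCc3 : ∀ v : V, (C v).card = 3 := fun v => by rw [(hCstruct v).1, hd3]
  have hgidx' : ∀ v : V, gidx v = (C v).equivFinOfCardEq (hCc3 v) ⟨v, hCself v⟩ := by
    intro v
    rw [hgidx]
    simp only [dif_pos (hCc3 v)]
  -- the map
  set fmap : V → Fin 9 := fun v => ⟨3 * (ridx v : ℕ) + (gidx v : ℕ), by
    have h1' : (ridx v : ℕ) < 3 := (ridx v).2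
    have h2' : (gidx v : ℕ) < 3 := (gidx v).2
    omega⟩ with hfmap
  have hdiv3 : ∀ v : V, ((fmap v : ℕ)) / 3 = (ridx v : ℕ) := by
    intro v
    rw [hfmap]
    have h2' : (gidx v : ℕ) < 3 := (gidx v).2
    simp only []
    omega
  have hfC : ∀ v w : V, C v = C w → ((fmap v : ℕ)) / 3 = ((fmap w : ℕ)) / 3 := by
    intro v w hcc
    rw [hdiv3, hdiv3, hridx]
    simp only []
    congr 2
    exact Subtype.ext hcc
  have hfC' : ∀ v w : V, ((fmap v : ℕ)) / 3 = ((fmap w : ℕ)) / 3 → C v = C w := by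
    intro v w h
    rw [hdiv3, hdiv3] at h
    have : (⟨C v, hCR v⟩ : { c // c ∈ R }) = ⟨C w, hCR w⟩ :=
      eR.injective (Fin.ext h)
    exact congrArg Subtype.val this
  have hginj : ∀ v w : V, C v = C w → gidx v = gidx w → v = w := by
    intro v w hcc hg
    rw [hgidx' v, hgidx' w] at hg
    -- transport along hcc
    have hkey : ∀ (c c' : Finset V) (hcc' : c = c') (hc3' : c.card = 3) (hc3'' : c'.card = 3)
        (x : V) (hx : x ∈ c) (y : V) (hy : y ∈ c'),
        (c.equivFinOfCardEq hc3' ⟨x, hx⟩ : Fin 3) = c'.equivFinOfCardEq hc3'' ⟨y, hy⟩ → x = y := by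
      rintro c c' rfl hc3' hc3'' x hx y hy hxy
      have := (c.equivFinOfCardEq hc3').injective (Fin.ext (congrArg Fin.val hxy))
      exact congrArg Subtype.val this
    exact hkey (C v) (C w) hcc (hCc3 v) (hCc3 w) v (hCself v) w ((hCmemiff w w).2 (Or.inl rfl)) hg
  have hfinj : Function.Injective fmap := by
    intro v w h
    have hval : (fmap v : ℕ) = (fmap w : ℕ) := congrArg Fin.val h
    have hdiv : ((fmap v : ℕ)) / 3 = ((fmap w : ℕ)) / 3 := by rw [hval]
    have hcc : C v = C w := hfC' v w hdiv
    apply hginj v w hcc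
    have h1' : (gidx v : ℕ) = (gidx w : ℕ) := by
      have hv1 : (fmap v : ℕ) = 3 * (ridx v : ℕ) + (gidx v : ℕ) := rfl
      have hv2 : (fmap w : ℕ) = 3 * (ridx w : ℕ) + (gidx w : ℕ) := rfl
      have h2' : (gidx v : ℕ) < 3 := (gidx v).2
      have h3' : (gidx w : ℕ) < 3 := (gidx w).2
      omega
    exact Fin.ext h1'
  have hfbij : Function.Bijective fmap := by
    rw [Fintype.bijective_iff_injective_and_card]
    exact ⟨hfinj, by rw [hn9]; simp⟩
  set e9 : V ≃ Fin 9 := Equiv.ofBijective fmap hfbij with he9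
  have he9app : ∀ v : V, e9 v = fmap v := fun v => rfl
  -- the adjacency correspondence
  have hadj_iff : ∀ v w : V, G.Adj v w ↔ (v ≠ w ∧ C v = C w) := by
    intro v w
    constructor
    · intro h
      exact ⟨h.ne, (hCadj v w h).symm⟩
    · rintro ⟨hne, hcc⟩
      have hw : w ∈ C v := by
        rw [hcc]
        exact hCself w
      exact (hCstruct v).2 v (hCself v) w hw hne
  refine ⟨⟨e9, ?_⟩⟩
  intro v w
  show threeK3.Adj (e9 v) (e9 w) ↔ G.Adj v w
  rw [threeK3, SimpleGraph.fromRel_adj, hadj_iff]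
  rw [he9app, he9app]
  constructor
  · rintro ⟨hne, h | h⟩
    · have hcc := hfC' v w h
      refine ⟨?_, hcc⟩
      intro hvw
      exact hne (by rw [hvw])
    · have hcc := hfC' w v h
      refine ⟨?_, hcc.symm⟩
      intro hvw
      exact hne (by rw [hvw])
  · rintro ⟨hne, hcc⟩
    refine ⟨?_, Or.inl (hfC v w hcc)⟩
    intro hf
    exact hne (hfinj hf)

end CaseC

end SMF

open SMF in
theorem star_matching_free_extremal {V : Type*} [Fintype V] [DecidableEq V] (G : SimpleGraph V)
    [DecidableRel G.Adj] (k : ℕ) (hk : 2 ≤ k)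
    (hiso : ∀ v : V, 0 < G.degree v)
    (h1 : ¬ ContainsCopy (_root_.starGraph k) G)
    (h2 : ¬ ContainsCopy (kMatching k) G)
    (h3 : ¬ ContainsCopy (disjUnionGraph (_root_.starGraph (k - 1)) (kMatching 1)) G)
    (he : G.edgeFinset.card = (k - 1) ^ 2) :
    Nonempty (G ≃g completeBipartiteGraph (Fin (k - 1)) (Fin (k - 1))) ∨
      (k = 4 ∧ Nonempty (G ≃g threeK3)) := by
  by_cases hB : ∃ v : V, G.degree v = k - 1
  · obtain ⟨v, hv⟩ := hB
    exact Or.inl (SMF.caseB G hk hiso h1 h3 he hv)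
  · push_neg at hB
    have hdeg : ∀ v : V, G.degree v < k - 1 := by
      intro v
      have h1' := SMF.degree_lt G h1 v
      have h2' := hB v
      omega
    exact Or.inr (SMF.caseC G hk hiso h2 he hdeg)
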